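/- arXiv:1301.5447 — 7 statements merged into one kernel-verified Lean document; each statement's English description precedes it below -/
import Mathlib

section
/- For every δ > 0 and every s > 0 one has ∑_{m=0}^∞ |m − s| · s^m / (m+1)! ≤ δ · (e^s − 1)/s + (1/δ) · (e^s − 2 − s + (e^s − 1)/s). -/
private lemma exp_tsum (s : ℝ) : ∑' n : ℕ, s ^ n / (n.factorial : ℝ) = Real.exp s := by
  rw [Real.exp_eq_exp_ℝ, NormedSpace.exp_eq_tsum_div]

private lemma sum_c {s : ℝ} (hs : 0 ≤ s) :
    Summable (fun m : ℕ => s ^ m / ((m + 1).factorial : ℝ)) := by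
  refine (Real.summable_pow_div_factorial s).of_norm_bounded (fun m => ?_)
  rw [Real.norm_eq_abs, abs_div, abs_of_nonneg (pow_nonneg hs m),
    abs_of_pos (by positivity : (0:ℝ) < ((m+1).factorial : ℝ))]
  gcongr
  exact Nat.le_succ m

private lemma tsum_c {s : ℝ} (hs : 0 < s) :
    ∑' m : ℕ, s ^ m / ((m + 1).factorial : ℝ) = (Real.exp s - 1) / s := by
  have h := Summable.tsum_eq_zero_add (Real.summable_pow_div_factorial s)
  rw [exp_tsum] at h
  simp only [pow_zero, Nat.factorial_zero, Nat.cast_one, div_one] at h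
  have h2 : ∑' m : ℕ, s ^ (m + 1) / ((m + 1).factorial : ℝ)
      = s * ∑' m : ℕ, s ^ m / ((m + 1).factorial : ℝ) := by
    rw [← tsum_mul_left]
    congr 1 with m
    rw [pow_succ]; ring
  rw [h2] at h
  field_simp
  linarith

private lemma sum_g {s : ℝ} (hs : 0 ≤ s) :
    Summable (fun m : ℕ => (m : ℝ) * s ^ m / (m.factorial : ℝ)) := by
  rw [← summable_nat_add_iff 1]
  have : (fun m : ℕ => ((m + 1 : ℕ) : ℝ) * s ^ (m + 1) / ((m + 1).factorial : ℝ))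
      = fun m : ℕ => s * (s ^ m / (m.factorial : ℝ)) := by
    funext m
    rw [Nat.factorial_succ, pow_succ]
    push_cast
    have h1 : ((m.factorial : ℝ)) ≠ 0 := by positivity
    field_simp
  rw [this]
  exact (Real.summable_pow_div_factorial s).mul_left s

private lemma tsum_g {s : ℝ} (hs : 0 ≤ s) :
    ∑' m : ℕ, (m : ℝ) * s ^ m / (m.factorial : ℝ) = s * Real.exp s := by
  have h := Summable.tsum_eq_zero_add (sum_g hs)
  simp only [Nat.cast_zero, zero_mul, zero_div, zero_add] at h
  rw [h]
  have : (fun m : ℕ => ((m + 1 : ℕ) : ℝ) * s ^ (m + 1) / ((m + 1).factorial : ℝ))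
      = fun m : ℕ => s * (s ^ m / (m.factorial : ℝ)) := by
    funext m
    rw [Nat.factorial_succ, pow_succ]
    push_cast
    have h1 : ((m.factorial : ℝ)) ≠ 0 := by positivity
    field_simp
  rw [this, tsum_mul_left, exp_tsum]

/-- `d m = m s^m/(m+1)! = s^m/m! - s^m/(m+1)!` pointwise. -/
private lemma d_eq (s : ℝ) (m : ℕ) :
    (m : ℝ) * s ^ m / ((m + 1).factorial : ℝ)
      = s ^ m / (m.factorial : ℝ) - s ^ m / ((m + 1).factorial : ℝ) := by
  rw [Nat.factorial_succ]
  have h1 : ((m.factorial : ℝ)) ≠ 0 := by positivity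
  push_cast
  field_simp
  ring

private lemma sum_d {s : ℝ} (hs : 0 ≤ s) :
    Summable (fun m : ℕ => (m : ℝ) * s ^ m / ((m + 1).factorial : ℝ)) := by
  have := (Real.summable_pow_div_factorial s).sub (sum_c hs)
  refine this.congr fun m => (d_eq s m).symm

private lemma tsum_d {s : ℝ} (hs : 0 < s) :
    ∑' m : ℕ, (m : ℝ) * s ^ m / ((m + 1).factorial : ℝ)
      = Real.exp s - (Real.exp s - 1) / s := by
  have : ∑' m : ℕ, (m : ℝ) * s ^ m / ((m + 1).factorial : ℝ)
      = ∑' m : ℕ, (s ^ m / (m.factorial : ℝ) - s ^ m / ((m + 1).factorial : ℝ)) := by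
    congr 1 with m; exact d_eq s m
  rw [this, Summable.tsum_sub (Real.summable_pow_div_factorial s) (sum_c hs.le), exp_tsum, tsum_c hs]

/-- `f m = m^2 s^m/(m+1)! = m s^m/m! - m s^m/(m+1)!` pointwise. -/
private lemma f_eq (s : ℝ) (m : ℕ) :
    (m : ℝ) ^ 2 * s ^ m / ((m + 1).factorial : ℝ)
      = (m : ℝ) * s ^ m / (m.factorial : ℝ) - (m : ℝ) * s ^ m / ((m + 1).factorial : ℝ) := by
  rw [Nat.factorial_succ]
  have h1 : ((m.factorial : ℝ)) ≠ 0 := by positivity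
  push_cast
  field_simp
  ring

private lemma sum_f {s : ℝ} (hs : 0 ≤ s) :
    Summable (fun m : ℕ => (m : ℝ) ^ 2 * s ^ m / ((m + 1).factorial : ℝ)) := by
  have := (sum_g hs).sub (sum_d hs)
  refine this.congr fun m => (f_eq s m).symm

private lemma tsum_f {s : ℝ} (hs : 0 < s) :
    ∑' m : ℕ, (m : ℝ) ^ 2 * s ^ m / ((m + 1).factorial : ℝ)
      = s * Real.exp s - (Real.exp s - (Real.exp s - 1) / s) := by
  have : ∑' m : ℕ, (m : ℝ) ^ 2 * s ^ m / ((m + 1).factorial : ℝ)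
      = ∑' m : ℕ, ((m : ℝ) * s ^ m / (m.factorial : ℝ)
          - (m : ℝ) * s ^ m / ((m + 1).factorial : ℝ)) := by
    congr 1 with m; exact f_eq s m
  rw [this, Summable.tsum_sub (sum_g hs.le) (sum_d hs.le), tsum_g hs.le, tsum_d hs]

private lemma b_eq (s : ℝ) (m : ℕ) :
    ((m : ℝ) - s) ^ 2 * s ^ m / ((m + 1).factorial : ℝ)
      = (m : ℝ) ^ 2 * s ^ m / ((m + 1).factorial : ℝ)
        - 2 * s * ((m : ℝ) * s ^ m / ((m + 1).factorial : ℝ))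
        + s ^ 2 * (s ^ m / ((m + 1).factorial : ℝ)) := by
  have h1 : (((m + 1).factorial : ℝ)) ≠ 0 := by positivity
  field_simp
  ring

private lemma sum_b {s : ℝ} (hs : 0 ≤ s) :
    Summable (fun m : ℕ => ((m : ℝ) - s) ^ 2 * s ^ m / ((m + 1).factorial : ℝ)) := by
  have := ((sum_f hs).sub (((sum_d hs).mul_left (2 * s)))).add ((sum_c hs).mul_left (s ^ 2))
  refine this.congr fun m => (b_eq s m).symm

private lemma tsum_b {s : ℝ} (hs : 0 < s) :
    ∑' m : ℕ, ((m : ℝ) - s) ^ 2 * s ^ m / ((m + 1).factorial : ℝ)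
      = Real.exp s - 2 - s + (Real.exp s - 1) / s := by
  have h : ∑' m : ℕ, ((m : ℝ) - s) ^ 2 * s ^ m / ((m + 1).factorial : ℝ)
      = ∑' m : ℕ, ((m : ℝ) ^ 2 * s ^ m / ((m + 1).factorial : ℝ)
          - 2 * s * ((m : ℝ) * s ^ m / ((m + 1).factorial : ℝ))
          + s ^ 2 * (s ^ m / ((m + 1).factorial : ℝ))) := by
    congr 1 with m; exact b_eq s m
  rw [h, Summable.tsum_add ((sum_f hs.le).sub ((sum_d hs.le).mul_left (2 * s)))
      ((sum_c hs.le).mul_left (s ^ 2)),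
    Summable.tsum_sub (sum_f hs.le) ((sum_d hs.le).mul_left (2 * s)),
    tsum_mul_left, tsum_mul_left, tsum_f hs, tsum_d hs, tsum_c hs]
  field_simp
  ring

/-- For every `δ > 0` and every `s > 0`,
`∑_{m=0}^∞ |m − s| s^m / (m+1)! ≤ δ (e^s − 1)/s + (1/δ)(e^s − 2 − s + (e^s − 1)/s)`. -/
theorem stmt1 (δ s : ℝ) (hδ : 0 < δ) (hs : 0 < s) :
    (∑' m : ℕ, |(m : ℝ) - s| * s ^ m / ((m + 1).factorial : ℝ)) ≤
      δ * (Real.exp s - 1) / s +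
        (1 / δ) * (Real.exp s - 2 - s + (Real.exp s - 1) / s) := by
  have hpt : ∀ m : ℕ, |(m : ℝ) - s| * s ^ m / ((m + 1).factorial : ℝ)
      ≤ δ * (s ^ m / ((m + 1).factorial : ℝ))
        + (1 / δ) * (((m : ℝ) - s) ^ 2 * s ^ m / ((m + 1).factorial : ℝ)) := by
    intro m
    have habs : |(m : ℝ) - s| ≤ δ + (1 / δ) * ((m : ℝ) - s) ^ 2 := by
      rw [← mul_le_mul_iff_right₀ hδ]
      have heq : δ * (δ + 1 / δ * ((m : ℝ) - s) ^ 2) = δ ^ 2 + ((m : ℝ) - s) ^ 2 := by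
        field_simp
      rw [heq]
      nlinarith [sq_nonneg (|(m : ℝ) - s| - δ), sq_abs ((m : ℝ) - s)]
    have hnn : (0:ℝ) ≤ s ^ m / ((m + 1).factorial : ℝ) := by positivity
    calc |(m : ℝ) - s| * s ^ m / ((m + 1).factorial : ℝ)
        = |(m : ℝ) - s| * (s ^ m / ((m + 1).factorial : ℝ)) := by ring
      _ ≤ (δ + (1 / δ) * ((m : ℝ) - s) ^ 2) * (s ^ m / ((m + 1).factorial : ℝ)) :=
          mul_le_mul_of_nonneg_right habs hnn
      _ = δ * (s ^ m / ((m + 1).factorial : ℝ))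
          + (1 / δ) * (((m : ℝ) - s) ^ 2 * s ^ m / ((m + 1).factorial : ℝ)) := by ring
  have hsumR : Summable (fun m : ℕ => δ * (s ^ m / ((m + 1).factorial : ℝ))
      + (1 / δ) * (((m : ℝ) - s) ^ 2 * s ^ m / ((m + 1).factorial : ℝ))) :=
    ((sum_c hs.le).mul_left δ).add ((sum_b hs.le).mul_left (1 / δ))
  have hsumL : Summable (fun m : ℕ => |(m : ℝ) - s| * s ^ m / ((m + 1).factorial : ℝ)) := by
    refine hsumR.of_nonneg_of_le (fun m => by positivity) hpt
  calc (∑' m : ℕ, |(m : ℝ) - s| * s ^ m / ((m + 1).factorial : ℝ))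
      ≤ ∑' m : ℕ, (δ * (s ^ m / ((m + 1).factorial : ℝ))
          + (1 / δ) * (((m : ℝ) - s) ^ 2 * s ^ m / ((m + 1).factorial : ℝ))) :=
        Summable.tsum_le_tsum hpt hsumL hsumR
    _ = δ * ((Real.exp s - 1) / s)
        + (1 / δ) * (Real.exp s - 2 - s + (Real.exp s - 1) / s) := by
        rw [Summable.tsum_add ((sum_c hs.le).mul_left δ) ((sum_b hs.le).mul_left (1 / δ)),
          tsum_mul_left, tsum_mul_left, tsum_c hs, tsum_b hs]
    _ = δ * (Real.exp s - 1) / s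
        + (1 / δ) * (Real.exp s - 2 - s + (Real.exp s - 1) / s) := by ring
end

section
/- For every γ > 0, b > 0, x ≥ 0 and t > 0 one has ∫_0^∞ p^{γ,b}(x,y,t) dy = 1. -/
open MeasureTheory

/-- The kernel `p^{γ,b}(x,y,t)` for `b > 0`. -/
noncomputable def pker (γ b x y t : ℝ) : ℝ :=
  (γ * t) ^ (-(b / γ)) * Real.exp (-(x + y) / (γ * t)) * y ^ (b / γ - 1) *
    ∑' m : ℕ,
      (x * y) ^ m / ((m.factorial : ℝ) * Real.Gamma ((m : ℝ) + b / γ) * (γ * t) ^ (2 * m))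

/-- For every `γ > 0`, `b > 0`, `x ≥ 0` and `t > 0`, `∫_0^∞ p^{γ,b}(x,y,t) dy = 1`. -/
theorem stmt4 (γ b x t : ℝ) (hγ : 0 < γ) (hb : 0 < b) (hx : 0 ≤ x) (ht : 0 < t) :
    ∫ y in Set.Ioi (0:ℝ), pker γ b x y t = 1 := by
  set c := γ * t with hc_def
  have hc : 0 < c := mul_pos hγ ht
  set ν := b / γ with hν_def
  have hν : 0 < ν := div_pos hb hγ
  set F : ℕ → ℝ → ℝ := fun m y =>
    c ^ (-ν) * Real.exp (-(x + y) / c) * y ^ (ν - 1) *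
      ((x * y) ^ m / ((m.factorial : ℝ) * Real.Gamma ((m : ℝ) + ν) * c ^ (2 * m))) with hF
  -- pointwise expansion of the kernel as a series
  have hpker : ∀ y : ℝ, pker γ b x y t = ∑' m, F m y := by
    intro y
    rw [pker]
    exact (tsum_mul_left).symm
  -- rewrite each term on Ioi 0
  have hΓ : ∀ m : ℕ, 0 < Real.Gamma ((m : ℝ) + ν) :=
    fun m => Real.Gamma_pos_of_pos (by positivity)
  have h1 : ∀ m : ℕ, ∀ y ∈ Set.Ioi (0:ℝ), F m y
      = (c ^ (-ν) * Real.exp (-(x / c)) * x ^ m /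
          ((m.factorial : ℝ) * Real.Gamma ((m : ℝ) + ν) * c ^ (2 * m)))
        * (y ^ ((m : ℝ) + ν - 1) * Real.exp (-(1 / c * y))) := by
    intro m y hy
    have hy0 : (0:ℝ) < y := hy
    have he : Real.exp (-(x + y) / c) = Real.exp (-(x / c)) * Real.exp (-(1 / c * y)) := by
      rw [← Real.exp_add]
      congr 1
      field_simp
      ring
    have hyp : y ^ ((m : ℝ) + ν - 1) = y ^ (ν - 1) * y ^ m := by
      rw [← Real.rpow_natCast y m, ← Real.rpow_add hy0]
      ring_nf
    simp only [hF]
    rw [he, hyp, mul_pow]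
    ring
  -- value of each integral
  have key : ∀ m : ℕ, ∫ y in Set.Ioi (0:ℝ), F m y
      = Real.exp (-(x / c)) * ((x / c) ^ m / (m.factorial : ℝ)) := by
    intro m
    rw [setIntegral_congr_fun measurableSet_Ioi (h1 m), integral_const_mul,
      Real.integral_rpow_mul_exp_neg_mul_Ioi (by positivity) (by positivity), one_div_one_div]
    have hca : c ^ ((m : ℝ) + ν) = c ^ m * c ^ ν := by
      rw [Real.rpow_add hc, Real.rpow_natCast]
    rw [hca, Real.rpow_neg hc.le]
    have h2m : c ^ (2 * m) = c ^ m * c ^ m := by rw [two_mul, pow_add]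
    rw [h2m, div_pow]
    have hcm : (c : ℝ) ^ m ≠ 0 := pow_ne_zero _ hc.ne'
    have hcν : (c : ℝ) ^ ν ≠ 0 := (Real.rpow_pos_of_pos hc ν).ne'
    have hfm : ((m.factorial : ℝ)) ≠ 0 := Nat.cast_ne_zero.mpr m.factorial_ne_zero
    field_simp
  -- integrability of each term
  have hint : ∀ m : ℕ, Integrable (F m) (volume.restrict (Set.Ioi (0:ℝ))) := by
    intro m
    have hbase : IntegrableOn
        (fun y : ℝ => y ^ ((m : ℝ) + ν - 1) * Real.exp (-(1 / c) * y)) (Set.Ioi 0) := by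
      have := integrableOn_rpow_mul_exp_neg_mul_rpow
        (p := 1) (s := (m : ℝ) + ν - 1) (b := 1 / c) (by simp; positivity) one_pos (by positivity)
      refine this.congr_fun (fun y hy => ?_) measurableSet_Ioi
      simp only [Real.rpow_one]
    have h3 : IntegrableOn
        (fun y : ℝ => (c ^ (-ν) * Real.exp (-(x / c)) * x ^ m /
          ((m.factorial : ℝ) * Real.Gamma ((m : ℝ) + ν) * c ^ (2 * m))) *
          (y ^ ((m : ℝ) + ν - 1) * Real.exp (-(1 / c) * y))) (Set.Ioi 0) :=
      hbase.const_mul _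
    refine h3.congr_fun (fun y hy => ?_) measurableSet_Ioi
    rw [h1 m y hy]
    ring_nf
  -- nonnegativity hence norm equals value
  have hnorm : ∀ m : ℕ, ∫ y in Set.Ioi (0:ℝ), ‖F m y‖
      = ∫ y in Set.Ioi (0:ℝ), F m y := by
    intro m
    refine setIntegral_congr_fun measurableSet_Ioi (fun y hy => ?_)
    have hy0 : (0:ℝ) < y := hy
    have : 0 ≤ F m y := by
      have hg := (hΓ m).le
      simp only [hF]
      positivity
    exact Real.norm_of_nonneg this
  -- summability of the integrals of norms
  have hsum : Summable (fun m : ℕ => ∫ y in Set.Ioi (0:ℝ), ‖F m y‖) := by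
    refine Summable.congr (f := fun m : ℕ =>
      Real.exp (-(x / c)) * ((x / c) ^ m / (m.factorial : ℝ))) ?_ ?_
    · exact (Real.summable_pow_div_factorial (x / c)).mul_left _
    · intro m
      rw [hnorm m, key m]
  -- put everything together
  calc ∫ y in Set.Ioi (0:ℝ), pker γ b x y t
      = ∫ y in Set.Ioi (0:ℝ), ∑' m, F m y := by
        refine setIntegral_congr_fun measurableSet_Ioi (fun y _ => hpker y)
    _ = ∑' m, ∫ y in Set.Ioi (0:ℝ), F m y :=
        (integral_tsum_of_summable_integral_norm hint hsum).symm
    _ = Real.exp (-(x / c)) * ∑' m : ℕ, (x / c) ^ m / (m.factorial : ℝ) := by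
        rw [← tsum_mul_left]
        exact tsum_congr key
    _ = Real.exp (-(x / c)) * Real.exp (x / c) := by
        congr 1
        rw [Real.exp_eq_exp_ℝ, NormedSpace.exp_eq_tsum_div]
    _ = 1 := by rw [← Real.exp_add]; simp
end

section
/- Let γ > 0 and b > 0. Then for every x > 0 and t > 0 one has ∫_0^∞ p^{γ,b}(x,y,t) · (y − x) dy = b·t. -/
open MeasureTheory Real

-- scaled Gamma integral
lemma gamma_int {a s : ℝ} (ha : 0 < a) (hs : 0 < s) :
    IntegrableOn (fun y : ℝ => Real.exp (-(y / s)) * y ^ (a - 1)) (Set.Ioi 0) ∧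
    ∫ y in Set.Ioi (0:ℝ), Real.exp (-(y / s)) * y ^ (a - 1) = Real.Gamma a * s ^ a := by
  have hb : (0:ℝ) < 1 / s := by positivity
  have heq : ∀ y ∈ Set.Ioi (0:ℝ),
      y ^ (a - 1) * Real.exp (-(1/s) * y ^ (1:ℝ)) = Real.exp (-(y / s)) * y ^ (a - 1) := by
    intro y hy
    rw [Real.rpow_one, mul_comm]
    congr 1
    field_simp
  constructor
  · exact ((integrableOn_rpow_mul_exp_neg_mul_rpow (by linarith) one_pos hb).congr_fun
      heq measurableSet_Ioi)
  · have := Real.integral_rpow_mul_exp_neg_mul_Ioi ha hb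
    rw [one_div_one_div] at this
    rw [mul_comm (Real.Gamma a), ← this]
    refine setIntegral_congr_fun measurableSet_Ioi fun y hy => ?_
    rw [mul_comm]
    congr 2
    field_simp

lemma moment_int {a s : ℝ} (ha : 0 < a) (hs : 0 < s) (c : ℝ) :
    IntegrableOn (fun y : ℝ => Real.exp (-(y / s)) * y ^ (a - 1) * (y + c)) (Set.Ioi 0) ∧
    ∫ y in Set.Ioi (0:ℝ), Real.exp (-(y / s)) * y ^ (a - 1) * (y + c)
      = Real.Gamma a * s ^ a * (a * s + c) := by
  have h1 := gamma_int (a := a + 1) (by linarith) hs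
  have h2 := gamma_int (a := a) ha hs
  have hkey : ∀ y ∈ Set.Ioi (0:ℝ),
      Real.exp (-(y / s)) * y ^ (a - 1) * (y + c)
        = Real.exp (-(y / s)) * y ^ (a + 1 - 1) + c * (Real.exp (-(y / s)) * y ^ (a - 1)) := by
    intro y hy
    have hy0 : (0:ℝ) < y := hy
    have : y ^ (a + 1 - 1) = y ^ (a - 1) * y := by
      rw [show a + 1 - 1 = (a - 1) + 1 by ring, Real.rpow_add_one hy0.ne']
    rw [this]; ring
  have hint : IntegrableOn (fun y : ℝ => Real.exp (-(y / s)) * y ^ (a + 1 - 1)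
      + c * (Real.exp (-(y / s)) * y ^ (a - 1))) (Set.Ioi 0) :=
    h1.1.add (h2.1.const_mul c)
  constructor
  · exact hint.congr_fun (fun y hy => (hkey y hy).symm) measurableSet_Ioi
  · rw [setIntegral_congr_fun measurableSet_Ioi hkey,
      integral_add h1.1 (h2.1.const_mul c), MeasureTheory.integral_const_mul, h1.2, h2.2,
      Real.Gamma_add_one ha.ne', Real.rpow_add_one hs.ne']
    ring

lemma tsum_exp_aux (u : ℝ) : ∑' m : ℕ, u ^ m / (m.factorial : ℝ) = Real.exp u := by
  rw [Real.exp_eq_exp_ℝ, NormedSpace.exp_eq_tsum_div]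

lemma succ_term_aux (u : ℝ) (n : ℕ) :
    ((n + 1 : ℕ) : ℝ) * u ^ (n + 1) / ((n + 1).factorial : ℝ) = u * (u ^ n / (n.factorial : ℝ)) := by
  rw [Nat.factorial_succ]
  push_cast
  have h1 : ((n.factorial : ℝ)) ≠ 0 := Nat.cast_ne_zero.2 n.factorial_ne_zero
  field_simp
  ring

lemma summable_mul_pow_aux (u : ℝ) :
    Summable (fun m : ℕ => (m : ℝ) * u ^ m / (m.factorial : ℝ)) := by
  rw [← summable_nat_add_iff 1]
  refine Summable.congr ((Real.summable_pow_div_factorial u).mul_left u) fun n => ?_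
  exact (succ_term_aux u n).symm

lemma tsum_mul_pow_aux (u : ℝ) :
    ∑' m : ℕ, (m : ℝ) * u ^ m / (m.factorial : ℝ) = u * Real.exp u := by
  rw [Summable.tsum_eq_zero_add (summable_mul_pow_aux u)]
  simp only [Nat.cast_zero, zero_mul, zero_div, zero_add]
  calc ∑' n : ℕ, ((n + 1 : ℕ) : ℝ) * u ^ (n + 1) / ((n + 1).factorial : ℝ)
      = ∑' n : ℕ, u * (u ^ n / (n.factorial : ℝ)) := tsum_congr (succ_term_aux u)
    _ = u * Real.exp u := by rw [tsum_mul_left, tsum_exp_aux]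

/-- For `γ > 0`, `b > 0`, `x > 0` and `t > 0`, `∫_0^∞ p^{γ,b}(x,y,t)(y − x) dy = b t`. -/
theorem stmt5 (γ b : ℝ) (hγ : 0 < γ) (hb : 0 < b) (x t : ℝ) (hx : 0 < x) (ht : 0 < t) :
    ∫ y in Set.Ioi (0:ℝ), pker γ b x y t * (y - x) = b * t := by
  set s := γ * t with hs_def
  set β := b / γ with hβ_def
  have hs : 0 < s := mul_pos hγ ht
  have hβ : 0 < β := div_pos hb hγ
  set u := x / s with hu_def
  have hu : 0 < u := div_pos hx hs
  have ha : ∀ m : ℕ, 0 < (m : ℝ) + β := fun m => add_pos_of_nonneg_of_pos (Nat.cast_nonneg m) hβ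
  have hΓ : ∀ m : ℕ, 0 < Real.Gamma ((m : ℝ) + β) := fun m => Real.Gamma_pos_of_pos (ha m)
  set K : ℕ → ℝ := fun m => s ^ (-β) * Real.exp (-(x / s)) * x ^ m /
      ((m.factorial : ℝ) * Real.Gamma ((m : ℝ) + β) * s ^ (2 * m)) with hK_def
  have hK : ∀ m, 0 < K m := fun m => by
    have := hΓ m
    have h1 : (0:ℝ) < s ^ (-β) := Real.rpow_pos_of_pos hs _
    have h2 : (0:ℝ) < (m.factorial : ℝ) := Nat.cast_pos.2 m.factorial_pos
    positivity
  set G : ℕ → ℝ → ℝ := fun m y =>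
    K m * (Real.exp (-(y / s)) * y ^ (((m : ℝ) + β) - 1) * (y + -x)) with hG_def
  -- integrability of each G m
  have hGint : ∀ m, IntegrableOn (G m) (Set.Ioi 0) := fun m =>
    ((moment_int (ha m) hs (-x)).1.const_mul (K m))
  -- value of K m * (Γ a * s ^ a)
  have hKΓ : ∀ m : ℕ, K m * (Real.Gamma ((m : ℝ) + β) * s ^ ((m : ℝ) + β))
      = Real.exp (-u) * (u ^ m / (m.factorial : ℝ)) := by
    intro m
    have e1 : s ^ ((m : ℝ) + β) = s ^ m * s ^ β := by
      rw [Real.rpow_add hs, Real.rpow_natCast]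
    have e2 : s ^ (-β) = (s ^ β)⁻¹ := Real.rpow_neg hs.le β
    have e3 : s ^ (2 * m) = s ^ m * s ^ m := by rw [two_mul, pow_add]
    have e4 : u ^ m = x ^ m / s ^ m := div_pow x s m
    have h2 : ((m.factorial : ℝ)) ≠ 0 := Nat.cast_ne_zero.2 m.factorial_ne_zero
    have h3 : Real.Gamma ((m : ℝ) + β) ≠ 0 := (hΓ m).ne'
    have h4 : s ^ m ≠ 0 := pow_ne_zero m hs.ne'
    have h5 : s ^ β ≠ 0 := (Real.rpow_pos_of_pos hs β).ne'
    rw [hK_def]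
    simp only [hu_def]
    rw [e1, e2, e3, e4]
    field_simp
  have hGval : ∀ m : ℕ, ∫ y in Set.Ioi (0:ℝ), G m y
      = Real.exp (-u) * (u ^ m / (m.factorial : ℝ)) * (((m : ℝ) + β) * s + -x) := by
    intro m
    rw [hG_def]
    simp only
    rw [MeasureTheory.integral_const_mul, (moment_int (ha m) hs (-x)).2, ← mul_assoc, hKΓ m]
  -- bound on the norm integrals
  have hG'val : ∀ m : ℕ, ∫ y in Set.Ioi (0:ℝ),
      K m * (Real.exp (-(y / s)) * y ^ (((m : ℝ) + β) - 1) * (y + x))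
      = Real.exp (-u) * (u ^ m / (m.factorial : ℝ)) * (((m : ℝ) + β) * s + x) := by
    intro m
    rw [MeasureTheory.integral_const_mul, (moment_int (ha m) hs x).2, ← mul_assoc, hKΓ m]
  have hnorm_le : ∀ m : ℕ, (∫ y in Set.Ioi (0:ℝ), ‖G m y‖)
      ≤ Real.exp (-u) * (u ^ m / (m.factorial : ℝ)) * (((m : ℝ) + β) * s + x) := by
    intro m
    rw [← hG'val m]
    refine setIntegral_mono_on (hGint m).norm
      ((moment_int (ha m) hs x).1.const_mul (K m)) measurableSet_Ioi ?_
    intro y hy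
    have hy0 : (0:ℝ) < y := hy
    have hb1 : |y + -x| ≤ y + x := by
      rw [abs_le]; constructor <;> nlinarith
    rw [hG_def]
    simp only [norm_mul, Real.norm_eq_abs]
    rw [abs_of_pos (hK m), abs_of_pos (Real.exp_pos _),
      abs_of_pos (Real.rpow_pos_of_pos hy0 _)]
    have h0 : (0:ℝ) ≤ K m * (Real.exp (-(y / s)) * y ^ (((m : ℝ) + β) - 1)) := by
      have := (hK m).le
      have := (Real.exp_pos (-(y / s))).le
      have := (Real.rpow_pos_of_pos hy0 (((m : ℝ) + β) - 1)).le
      positivity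
    calc K m * (Real.exp (-(y / s)) * y ^ (((m : ℝ) + β) - 1) * |y + -x|)
        ≤ K m * (Real.exp (-(y / s)) * y ^ (((m : ℝ) + β) - 1) * (y + x)) := by
          have := (hK m).le
          have he := (Real.exp_pos (-(y / s))).le
          have hr := (Real.rpow_pos_of_pos hy0 (((m : ℝ) + β) - 1)).le
          gcongr
      _ = _ := by ring
  -- summability of the bound
  have hSum1 : Summable (fun m : ℕ => (m : ℝ) * u ^ m / (m.factorial : ℝ)) :=
    summable_mul_pow_aux u
  have hSum2 : Summable (fun m : ℕ => u ^ m / (m.factorial : ℝ)) :=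
    Real.summable_pow_div_factorial u
  have hBsum : Summable (fun m : ℕ =>
      Real.exp (-u) * (u ^ m / (m.factorial : ℝ)) * (((m : ℝ) + β) * s + x)) := by
    refine Summable.congr (((hSum1.mul_left (Real.exp (-u) * s)).add
      (hSum2.mul_left (Real.exp (-u) * (β * s + x))))) fun m => ?_
    have h2 : ((m.factorial : ℝ)) ≠ 0 := Nat.cast_ne_zero.2 m.factorial_ne_zero
    field_simp
    ring
  have hGsum : Summable (fun m : ℕ => ∫ y in Set.Ioi (0:ℝ), ‖G m y‖) :=
    Summable.of_nonneg_of_le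
      (fun m => integral_nonneg fun y => norm_nonneg _) hnorm_le hBsum
  -- interchange sum and integral
  have hinter := MeasureTheory.integral_tsum_of_summable_integral_norm
    (μ := volume.restrict (Set.Ioi 0)) (F := G) hGint hGsum
  -- pointwise identity
  have hpt : ∀ y ∈ Set.Ioi (0:ℝ), pker γ b x y t * (y - x) = ∑' m, G m y := by
    intro y hy
    have hy0 : (0:ℝ) < y := hy
    rw [pker]
    rw [← hs_def, ← hβ_def]
    rw [← tsum_mul_left, ← tsum_mul_right]
    refine tsum_congr fun m => ?_
    rw [hG_def, hK_def]
    simp only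
    have e0 : -(x + y) / s = -(x / s) + -(y / s) := by ring
    rw [e0, Real.exp_add]
    have e1 : (x * y) ^ m = x ^ m * y ^ m := mul_pow x y m
    have e2 : y ^ (β - 1) * (y:ℝ) ^ m = y ^ (((m : ℝ) + β) - 1) := by
      rw [← Real.rpow_natCast y m, ← Real.rpow_add hy0]
      congr 1
      ring
    have h2 : ((m.factorial : ℝ)) ≠ 0 := Nat.cast_ne_zero.2 m.factorial_ne_zero
    have h3 : Real.Gamma ((m : ℝ) + β) ≠ 0 := (hΓ m).ne'
    have h4 : s ^ (2 * m) ≠ 0 := pow_ne_zero _ hs.ne'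
    rw [e1, ← e2]
    field_simp
    ring
  rw [setIntegral_congr_fun measurableSet_Ioi hpt, ← hinter]
  -- compute the sum
  have hstep : ∀ m : ℕ, ∫ y in Set.Ioi (0:ℝ), G m y
      = (Real.exp (-u) * s) * ((m : ℝ) * u ^ m / (m.factorial : ℝ))
        + (Real.exp (-u) * (β * s - x)) * (u ^ m / (m.factorial : ℝ)) := by
    intro m
    rw [hGval m]
    have h2 : ((m.factorial : ℝ)) ≠ 0 := Nat.cast_ne_zero.2 m.factorial_ne_zero
    field_simp
    ring
  calc ∑' m, ∫ y in Set.Ioi (0:ℝ), G m y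
      = ∑' m : ℕ, ((Real.exp (-u) * s) * ((m : ℝ) * u ^ m / (m.factorial : ℝ))
        + (Real.exp (-u) * (β * s - x)) * (u ^ m / (m.factorial : ℝ))) := tsum_congr hstep
    _ = (Real.exp (-u) * s) * (u * Real.exp u) + (Real.exp (-u) * (β * s - x)) * Real.exp u := by
        rw [Summable.tsum_add (hSum1.mul_left _) (hSum2.mul_left _), tsum_mul_left, tsum_mul_left,
          tsum_mul_pow_aux, tsum_exp_aux]
    _ = b * t := by
        have he : Real.exp (-u) * Real.exp u = 1 := by
          rw [← Real.exp_add, neg_add_cancel, Real.exp_zero]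
        have hsu : s * u = x := by
          rw [hu_def]; field_simp
        have hβs : β * s = b * t := by
          rw [hβ_def, hs_def]; field_simp
        have hrw : Real.exp (-u) * s * (u * Real.exp u) + Real.exp (-u) * (β * s - x) * Real.exp u
            = (Real.exp (-u) * Real.exp u) * (s * u) + (Real.exp (-u) * Real.exp u) * (β * s - x) := by
          ring
        rw [hrw, he, one_mul, one_mul, hsu]
        linarith [hβs]
end

section
/- Let γ > 0 and b > 0. Then for every natural number k ≥ 1 and every x > 0, t > 0 one has ∫_0^∞ p^{γ,b}(x,y,t)(y−x)^{k+1} dy = −x·∫_0^∞ p^{γ,b}(x,y,t)(y−x)^k dy + b·t·∫_0^∞ p^{γ,b+γ}(x,y,t)(y−x)^k dy + x·∫_0^∞ p^{γ,b+2γ}(x,y,t)(y−x)^k dy. -/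
open MeasureTheory

section Aux

private lemma fact_ineq8 (m : ℕ) : (2*m).factorial ≤ 8^m * m.factorial * (m-1).factorial := by
  induction m with
  | zero => simp
  | succ m ih =>
    rcases Nat.eq_zero_or_pos m with hm | hm
    · subst hm; decide
    · have h1 : (2*(m+1)).factorial = (2*m+2) * ((2*m+1) * (2*m).factorial) := by
        have h : 2*(m+1) = (2*m+1)+1 := by ring
        rw [h, Nat.factorial_succ, Nat.factorial_succ]
      rw [h1]
      have h2 : (2*m+2) * ((2*m+1) * (2*m).factorial)
          ≤ (2*m+2) * ((2*m+1) * (8^m * m.factorial * (m-1).factorial)) :=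
        Nat.mul_le_mul_left _ (Nat.mul_le_mul_left _ ih)
      refine h2.trans ?_
      have hmf : m * (m-1).factorial = m.factorial := Nat.mul_factorial_pred hm.ne'
      have hfs : (m+1-1).factorial = m.factorial := by simp
      rw [hfs, Nat.factorial_succ]
      calc (2*m+2) * ((2*m+1) * (8^m * m.factorial * (m-1).factorial))
          ≤ (2*m+2) * ((4*m) * (8^m * m.factorial * (m-1).factorial)) := by
            refine Nat.mul_le_mul_left _ (Nat.mul_le_mul_right _ ?_)
            omega
        _ = 8^(m+1) * ((m+1) * m.factorial) * (m * (m-1).factorial) := by ring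
        _ = 8^(m+1) * ((m+1) * m.factorial) * m.factorial := by rw [hmf]

private lemma gamma_lb {c : ℝ} (hc : 0 < c) (m : ℕ) :
    min (Real.Gamma c) (Real.Gamma (c+1)) * ((m-1).factorial : ℝ) ≤ Real.Gamma (m + c) := by
  have hK : 0 < min (Real.Gamma c) (Real.Gamma (c+1)) :=
    lt_min (Real.Gamma_pos_of_pos hc) (Real.Gamma_pos_of_pos (by linarith))
  induction m with
  | zero => simpa using min_le_left (Real.Gamma c) (Real.Gamma (c+1))
  | succ m ih =>
    rcases Nat.eq_zero_or_pos m with hm | hm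
    · subst hm
      simpa [add_comm] using min_le_right (Real.Gamma c) (Real.Gamma (c+1))
    · have hmc : (0:ℝ) < (m:ℝ) + c := by positivity
      have hG : Real.Gamma ((m:ℝ) + c + 1) = ((m:ℝ) + c) * Real.Gamma ((m:ℝ) + c) :=
        Real.Gamma_add_one (ne_of_gt hmc)
      have hcast : ((m+1 : ℕ):ℝ) + c = (m:ℝ) + c + 1 := by push_cast; ring
      rw [hcast, hG]
      have hfs : ((m+1-1).factorial : ℝ) = (m.factorial : ℝ) := by simp
      rw [hfs]
      have hmf : (m:ℝ) * ((m-1).factorial : ℝ) = (m.factorial : ℝ) := by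
        exact_mod_cast congrArg (Nat.cast (R := ℝ)) (Nat.mul_factorial_pred hm.ne')
      calc min (Real.Gamma c) (Real.Gamma (c+1)) * (m.factorial : ℝ)
          = (m:ℝ) * (min (Real.Gamma c) (Real.Gamma (c+1)) * ((m-1).factorial:ℝ)) := by
            rw [← hmf]; ring
        _ ≤ (m:ℝ) * Real.Gamma ((m:ℝ) + c) := by
            refine mul_le_mul_of_nonneg_left ih (by positivity)
        _ ≤ ((m:ℝ) + c) * Real.Gamma ((m:ℝ) + c) := by
            have := Real.Gamma_pos_of_pos hmc
            nlinarith

private lemma summ {c s x y : ℝ} (hc : 0 < c) (hs : 0 < s) :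
    Summable (fun m : ℕ => (x*y)^m / ((m.factorial : ℝ) * Real.Gamma ((m:ℝ) + c) * s^(2*m))) := by
  set K := min (Real.Gamma c) (Real.Gamma (c+1)) with hKdef
  have hK : 0 < K := lt_min (Real.Gamma_pos_of_pos hc) (Real.Gamma_pos_of_pos (by linarith))
  apply Summable.of_abs
  refine Summable.of_nonneg_of_le (fun m => abs_nonneg _)
    (fun m => ?_) (((Real.summable_pow_div_factorial (|x*y|/s^2)).mul_left K⁻¹))
  have hΓ : 0 < Real.Gamma ((m:ℝ) + c) := Real.Gamma_pos_of_pos (by positivity)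
  have hd : (0:ℝ) < (m.factorial : ℝ) * Real.Gamma ((m:ℝ) + c) * s^(2*m) := by positivity
  have h1 : |(x*y)^m / ((m.factorial : ℝ) * Real.Gamma ((m:ℝ) + c) * s^(2*m))|
      = |x*y|^m / ((m.factorial : ℝ) * Real.Gamma ((m:ℝ) + c) * s^(2*m)) := by
    rw [abs_div, abs_pow, abs_of_pos hd]
  rw [h1]
  have hKG : K ≤ Real.Gamma ((m:ℝ) + c) := by
    have := gamma_lb hc m
    have h2 : (1:ℝ) ≤ ((m-1).factorial : ℝ) :=
      by exact_mod_cast Nat.one_le_iff_ne_zero.mpr (Nat.factorial_ne_zero _)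
    nlinarith
  have heq : K⁻¹ * ((|x*y|/s^2)^m / (m.factorial : ℝ))
      = |x*y|^m / ((m.factorial : ℝ) * K * s^(2*m)) := by
    rw [div_pow, ← pow_mul]
    field_simp
  rw [heq]
  refine div_le_div_of_nonneg_left (by positivity) (by positivity) ?_
  have : (0:ℝ) < (m.factorial:ℝ) := by positivity
  nlinarith [pow_pos hs (2*m)]

private lemma tsum_le_exp {c s x y : ℝ} (hc : 0 < c) (hs : 0 < s) (hxy : 0 ≤ x*y) :
    ∑' m : ℕ, (x*y)^m / ((m.factorial:ℝ) * Real.Gamma ((m:ℝ)+c) * s^(2*m))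
      ≤ (min (Real.Gamma c) (Real.Gamma (c+1)))⁻¹ * Real.exp (Real.sqrt (8*(x*y)) / s) := by
  set K := min (Real.Gamma c) (Real.Gamma (c+1)) with hKdef
  have hK : 0 < K := lt_min (Real.Gamma_pos_of_pos hc) (Real.Gamma_pos_of_pos (by linarith))
  set w := Real.sqrt (8*(x*y)) / s with hwdef
  have hw : 0 ≤ w := by positivity
  have hinj : Function.Injective (fun m : ℕ => 2*m) := fun a b h => by
    simp only [] at h; omega
  have hsum2 : Summable (fun m : ℕ => w^(2*m) / ((2*m).factorial : ℝ)) :=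
    (Real.summable_pow_div_factorial w).comp_injective hinj
  have hle : ∀ m : ℕ, (x*y)^m / ((m.factorial:ℝ) * Real.Gamma ((m:ℝ)+c) * s^(2*m))
      ≤ K⁻¹ * (w^(2*m) / ((2*m).factorial : ℝ)) := by
    intro m
    have hΓ : 0 < Real.Gamma ((m:ℝ) + c) := Real.Gamma_pos_of_pos (by positivity)
    have hwpow : w^(2*m) = 8^m * (x*y)^m / s^(2*m) := by
      calc w^(2*m) = ((Real.sqrt (8*(x*y)))^2)^m / (s^2)^m := by
            rw [hwdef, div_pow, pow_mul (Real.sqrt (8*(x*y))) 2 m, pow_mul s 2 m]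
        _ = 8^m * (x*y)^m / s^(2*m) := by
            rw [Real.sq_sqrt (by linarith : (0:ℝ) ≤ 8*(x*y)), mul_pow, ← pow_mul s 2 m]
    have hGlb : K * ((m-1).factorial : ℝ) ≤ Real.Gamma ((m:ℝ) + c) := gamma_lb hc m
    have hfact : ((2*m).factorial : ℝ) ≤ 8^m * (m.factorial : ℝ) * ((m-1).factorial : ℝ) := by
      exact_mod_cast Nat.cast_le.mpr (fact_ineq8 m)
    have key : K * ((2*m).factorial:ℝ) ≤ 8^m * (m.factorial:ℝ) * Real.Gamma ((m:ℝ)+c) := by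
      calc K * ((2*m).factorial:ℝ)
          ≤ K * (8^m * (m.factorial:ℝ) * ((m-1).factorial:ℝ)) :=
            mul_le_mul_of_nonneg_left hfact hK.le
        _ = 8^m * (m.factorial:ℝ) * (K * ((m-1).factorial:ℝ)) := by ring
        _ ≤ 8^m * (m.factorial:ℝ) * Real.Gamma ((m:ℝ)+c) :=
            mul_le_mul_of_nonneg_left hGlb (by positivity)
    have hR : K⁻¹ * (w^(2*m) / ((2*m).factorial:ℝ))
        = (8^m * (x*y)^m) / (K * ((2*m).factorial:ℝ) * s^(2*m)) := by
      rw [hwpow]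
      field_simp
    rw [hR, div_le_div_iff₀ (by positivity) (by positivity)]
    have hxym : (0:ℝ) ≤ (x*y)^m := pow_nonneg hxy m
    calc (x*y)^m * (K * ((2*m).factorial:ℝ) * s^(2*m))
        = ((x*y)^m * s^(2*m)) * (K * ((2*m).factorial:ℝ)) := by ring
      _ ≤ ((x*y)^m * s^(2*m)) * (8^m * (m.factorial:ℝ) * Real.Gamma ((m:ℝ)+c)) :=
          mul_le_mul_of_nonneg_left key (by positivity)
      _ = 8^m * (x*y)^m * ((m.factorial:ℝ) * Real.Gamma ((m:ℝ)+c) * s^(2*m)) := by ring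
  calc ∑' m : ℕ, (x*y)^m / ((m.factorial:ℝ) * Real.Gamma ((m:ℝ)+c) * s^(2*m))
      ≤ ∑' m : ℕ, K⁻¹ * (w^(2*m) / ((2*m).factorial : ℝ)) :=
        Summable.tsum_le_tsum hle (summ hc hs) (hsum2.mul_left _)
    _ = K⁻¹ * ∑' m : ℕ, w^(2*m) / ((2*m).factorial : ℝ) := tsum_mul_left
    _ ≤ K⁻¹ * Real.exp w := by
        refine mul_le_mul_of_nonneg_left ?_ (by positivity)
        have hexp : Real.exp w = ∑' n : ℕ, w^n / (n.factorial : ℝ) := by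
          rw [Real.exp_eq_exp_ℝ, NormedSpace.exp_eq_tsum_div]
        rw [hexp]
        refine Summable.tsum_le_tsum_of_inj (fun m => 2*m) hinj (fun n _ => by positivity)
          (fun m => le_refl _) hsum2 (Real.summable_pow_div_factorial w)

private lemma series_id {c s x y : ℝ} (hc : 0 < c) (hs : 0 < s) :
    ∑' m : ℕ, (x*y)^m / ((m.factorial:ℝ) * Real.Gamma ((m:ℝ)+c) * s^(2*m))
      = c * ∑' m : ℕ, (x*y)^m / ((m.factorial:ℝ) * Real.Gamma ((m:ℝ)+(c+1)) * s^(2*m))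
        + (x*y/s^2) * ∑' m : ℕ, (x*y)^m / ((m.factorial:ℝ) * Real.Gamma ((m:ℝ)+(c+2)) * s^(2*m)) := by
  set t1 : ℕ → ℝ := fun m => (x*y)^m / ((m.factorial:ℝ) * Real.Gamma ((m:ℝ)+(c+1)) * s^(2*m)) with ht1
  set t2 : ℕ → ℝ := fun m => (x*y)^m / ((m.factorial:ℝ) * Real.Gamma ((m:ℝ)+(c+2)) * s^(2*m)) with ht2
  have hsum1 : Summable t1 := summ (by linarith) hs
  have hsum2 : Summable t2 := summ (by linarith) hs
  have hterm : ∀ m : ℕ, (x*y)^m / ((m.factorial:ℝ) * Real.Gamma ((m:ℝ)+c) * s^(2*m))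
      = c * t1 m + (m:ℝ) * t1 m := by
    intro m
    have hmc : (0:ℝ) < (m:ℝ) + c := by positivity
    have hΓ : 0 < Real.Gamma ((m:ℝ)+c) := Real.Gamma_pos_of_pos hmc
    have h1 : Real.Gamma ((m:ℝ)+(c+1)) = ((m:ℝ)+c) * Real.Gamma ((m:ℝ)+c) := by
      rw [show (m:ℝ)+(c+1) = ((m:ℝ)+c)+1 by ring, Real.Gamma_add_one hmc.ne']
    have hf : ((m.factorial:ℝ)) ≠ 0 := by positivity
    have hsp : s^(2*m) ≠ 0 := by positivity
    simp only [ht1]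
    rw [h1]
    field_simp
    ring
  have hshift : ∀ n : ℕ, ((n+1:ℕ):ℝ) * t1 (n+1) = (x*y/s^2) * t2 n := by
    intro n
    have hΓeq : Real.Gamma (((n+1:ℕ):ℝ) + (c+1)) = Real.Gamma ((n:ℝ)+(c+2)) := by
      congr 1; push_cast; ring
    have hΓ : 0 < Real.Gamma ((n:ℝ)+(c+2)) := Real.Gamma_pos_of_pos (by positivity)
    have hfac : (((n+1).factorial : ℕ):ℝ) = ((n:ℝ)+1) * (n.factorial:ℝ) := by
      rw [Nat.factorial_succ]; push_cast; ring
    have hpow : s^(2*(n+1)) = s^(2*n) * s^2 := by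
      rw [show 2*(n+1) = 2*n+2 by ring, pow_add]
    simp only [ht1, ht2]
    rw [hΓeq, hfac, hpow, pow_succ]
    have hf : ((n.factorial:ℝ)) ≠ 0 := by positivity
    have hsp : s^(2*n) ≠ 0 := by positivity
    push_cast
    field_simp
  have hsum_mt1 : Summable (fun m : ℕ => (m:ℝ) * t1 m) :=
    (summable_nat_add_iff 1).mp
      (Summable.congr (hsum2.mul_left (x*y/s^2)) (fun n => (hshift n).symm))
  calc ∑' m : ℕ, (x*y)^m / ((m.factorial:ℝ) * Real.Gamma ((m:ℝ)+c) * s^(2*m))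
      = ∑' m : ℕ, (c * t1 m + (m:ℝ) * t1 m) := tsum_congr hterm
    _ = ∑' m : ℕ, c * t1 m + ∑' m : ℕ, (m:ℝ) * t1 m :=
        Summable.tsum_add (hsum1.mul_left c) hsum_mt1
    _ = c * ∑' m : ℕ, t1 m + (x*y/s^2) * ∑' m : ℕ, t2 m := by
        rw [tsum_mul_left]
        congr 1
        rw [Summable.tsum_eq_zero_add hsum_mt1]
        simp only [Nat.cast_zero, zero_mul, zero_add]
        rw [tsum_congr hshift, tsum_mul_left]

end Aux

private lemma pker_rec {γ b x t : ℝ} (hγ : 0 < γ) (hb : 0 < b) (ht : 0 < t) {y : ℝ} (hy : 0 < y) :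
    pker γ b x y t * y = b * t * pker γ (b+γ) x y t + x * pker γ (b+2*γ) x y t := by
  have hs : (0:ℝ) < γ*t := mul_pos hγ ht
  have hc : (0:ℝ) < b/γ := div_pos hb hγ
  have e1 : (b+γ)/γ = b/γ + 1 := by rw [add_div, div_self hγ.ne']
  have e2 : (b+2*γ)/γ = b/γ + 2 := by rw [add_div, mul_div_assoc, div_self hγ.ne', mul_one]
  unfold pker
  rw [e1, e2, series_id hc hs]
  have hy1 : y^(b/γ+1-1) = y^(b/γ-1) * y := by
    rw [show b/γ+1-1 = (b/γ-1)+1 by ring, Real.rpow_add hy, Real.rpow_one]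
  have hy2 : y^(b/γ+2-1) = y^(b/γ-1) * y * y := by
    rw [show b/γ+2-1 = (b/γ-1)+1+1 by ring, Real.rpow_add hy, Real.rpow_add hy, Real.rpow_one]
  have hs1 : (γ*t)^(-(b/γ+1)) = (γ*t)^(-(b/γ)) * (γ*t)⁻¹ := by
    rw [show -(b/γ+1) = -(b/γ) + (-1) by ring, Real.rpow_add hs, Real.rpow_neg_one]
  have hs2 : (γ*t)^(-(b/γ+2)) = (γ*t)^(-(b/γ)) * ((γ*t)⁻¹*(γ*t)⁻¹) := by
    rw [show -(b/γ+2) = -(b/γ) + (-1) + (-1) by ring, Real.rpow_add hs, Real.rpow_add hs,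
      Real.rpow_neg_one]
    ring
  rw [hy1, hy2, hs1, hs2]
  have hsne : (γ*t) ≠ 0 := hs.ne'
  have hγne : γ ≠ 0 := hγ.ne'
  field_simp

private lemma pker_integrable {γ b x t : ℝ} (hγ : 0 < γ) (hb : 0 < b) (hx : 0 < x) (ht : 0 < t)
    (k : ℕ) :
    IntegrableOn (fun y => pker γ b x y t * (y - x)^k) (Set.Ioi (0:ℝ)) := by
  have hs : (0:ℝ) < γ*t := mul_pos hγ ht
  have hc : (0:ℝ) < b/γ := div_pos hb hγ
  set K := min (Real.Gamma (b/γ)) (Real.Gamma (b/γ+1)) with hK0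
  have hK : 0 < K := lt_min (Real.Gamma_pos_of_pos hc) (Real.Gamma_pos_of_pos (by linarith))
  set B := (γ*t)^(-(b/γ)) * K⁻¹ * Real.exp (4*x/(γ*t)) * 2^k with hB0
  have hApos : (0:ℝ) < (γ*t)^(-(b/γ)) := Real.rpow_pos_of_pos hs _
  have hBpos : 0 < B := by positivity
  have h1 : IntegrableOn (fun y:ℝ => y^(b/γ-1) * Real.exp (-(1/(2*(γ*t))) * y))
      (Set.Ioi (0:ℝ)) := by
    have h := integrableOn_rpow_mul_exp_neg_mul_rpow (s := b/γ-1) (p := 1)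
      (b := 1/(2*(γ*t))) (by linarith) one_pos (by positivity)
    simpa [Real.rpow_one] using h
  have h2 : IntegrableOn (fun y:ℝ => y^(b/γ-1+(k:ℝ)) * Real.exp (-(1/(2*(γ*t))) * y))
      (Set.Ioi (0:ℝ)) := by
    have hk0 : (0:ℝ) ≤ (k:ℝ) := Nat.cast_nonneg k
    have h := integrableOn_rpow_mul_exp_neg_mul_rpow (s := b/γ-1+(k:ℝ)) (p := 1)
      (b := 1/(2*(γ*t))) (by linarith) one_pos (by positivity)
    simpa [Real.rpow_one] using h
  have hGint : IntegrableOn (fun y:ℝ =>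
      (B*x^k) * (y^(b/γ-1) * Real.exp (-(1/(2*(γ*t))) * y))
        + B * (y^(b/γ-1+(k:ℝ)) * Real.exp (-(1/(2*(γ*t))) * y))) (Set.Ioi (0:ℝ)) :=
    (h1.const_mul _).add (h2.const_mul _)
  have hSmeas : Measurable (fun y : ℝ =>
      ∑' m : ℕ, (x*y)^m / ((m.factorial:ℝ) * Real.Gamma ((m:ℝ)+b/γ) * (γ*t)^(2*m))) := by
    apply measurable_of_tendsto_metrizable
      (f := fun n => fun y : ℝ => ∑ m ∈ Finset.range n,
        (x*y)^m / ((m.factorial:ℝ) * Real.Gamma ((m:ℝ)+b/γ) * (γ*t)^(2*m)))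
    · intro n
      exact Finset.measurable_sum _
        (fun m _ => ((measurable_id.const_mul x).pow_const m).div_const _)
    · rw [tendsto_pi_nhds]
      intro y
      exact (summ hc hs).hasSum.tendsto_sum_nat
  have hmeas : Measurable (fun y : ℝ => pker γ b x y t * (y - x)^k) := by
    unfold pker
    refine Measurable.mul (Measurable.mul (Measurable.mul (Measurable.mul measurable_const ?_) ?_)
      hSmeas) ((measurable_id.sub_const x).pow_const k)
    · show Measurable fun y : ℝ => Real.exp (-(x + y)/(γ*t))
      fun_prop
    · show Measurable fun y : ℝ => y ^ (b/γ - 1)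
      fun_prop
  refine Integrable.mono' hGint hmeas.aestronglyMeasurable ?_
  rw [ae_restrict_iff' measurableSet_Ioi]
  refine MeasureTheory.ae_of_all _ (fun y hy => ?_)
  have hy' : 0 < y := hy
  have hterm_nonneg : ∀ m : ℕ,
      0 ≤ (x*y)^m / ((m.factorial:ℝ) * Real.Gamma ((m:ℝ)+b/γ) * (γ*t)^(2*m)) := by
    intro m
    have hΓ : 0 < Real.Gamma ((m:ℝ) + b/γ) := Real.Gamma_pos_of_pos (by positivity)
    positivity
  have hSnn : 0 ≤ ∑' m : ℕ, (x*y)^m / ((m.factorial:ℝ) * Real.Gamma ((m:ℝ)+b/γ) * (γ*t)^(2*m)) :=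
    tsum_nonneg hterm_nonneg
  have hYpos : (0:ℝ) < y^(b/γ-1) := Real.rpow_pos_of_pos hy' _
  have hp0 : 0 ≤ pker γ b x y t := by
    unfold pker
    exact mul_nonneg (mul_nonneg (mul_nonneg hApos.le (Real.exp_pos _).le) hYpos.le) hSnn
  rw [Real.norm_eq_abs, abs_mul, abs_of_nonneg hp0, abs_pow]
  -- |y - x| ≤ x + y
  have habs : |y - x| ≤ x + y := by
    rw [abs_sub_le_iff]; constructor <;> linarith
  have hpowle : |y-x|^k ≤ (x+y)^k := pow_le_pow_left₀ (abs_nonneg _) habs k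
  -- (x+y)^k ≤ 2^k (x^k + y^k)
  have hbin : (x+y)^k ≤ 2^k * (x^k + y^k) := by
    have hxy2 : x + y ≤ 2 * max x y := by
      rcases le_total x y with h|h
      · rw [max_eq_right h]; linarith
      · rw [max_eq_left h]; linarith
    calc (x+y)^k ≤ (2*max x y)^k := pow_le_pow_left₀ (by positivity) hxy2 k
      _ = 2^k * (max x y)^k := mul_pow 2 (max x y) k
      _ ≤ 2^k * (x^k + y^k) := by
          refine mul_le_mul_of_nonneg_left ?_ (by positivity)
          rcases le_total x y with h|h
          · rw [max_eq_right h]; nlinarith [pow_nonneg hx.le k]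
          · rw [max_eq_left h]; nlinarith [pow_nonneg hy'.le k]
  -- exponential combination
  have hE : Real.exp (-(x+y)/(γ*t)) * Real.exp (Real.sqrt (8*(x*y))/(γ*t))
      ≤ Real.exp (4*x/(γ*t)) * Real.exp (-(1/(2*(γ*t)))*y) := by
    rw [← Real.exp_add, ← Real.exp_add]
    apply Real.exp_le_exp.mpr
    have hsq : Real.sqrt (8*(x*y)) ≤ (8*x+y)/2 := by
      have h8 : (0:ℝ) ≤ 8*(x*y) := by positivity
      have h := Real.sqrt_le_sqrt (show 8*(x*y) ≤ ((8*x+y)/2)^2 by nlinarith [sq_nonneg (4*x - y/2)])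
      rwa [Real.sqrt_sq (by positivity : (0:ℝ) ≤ (8*x+y)/2)] at h
    have h5 : -(x+y) + Real.sqrt (8*(x*y)) ≤ 4*x - y/2 := by nlinarith
    have h7 : (0:ℝ) ≤ (4*x - y/2 - (-(x+y) + Real.sqrt (8*(x*y))))/(γ*t) :=
      div_nonneg (by linarith) hs.le
    have h8' : (4*x - y/2 - (-(x+y) + Real.sqrt (8*(x*y))))/(γ*t)
        = 4*x/(γ*t) + (-(1/(2*(γ*t)))*y) - (-(x+y)/(γ*t) + Real.sqrt (8*(x*y))/(γ*t)) := by
      field_simp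
      ring
    rw [h8'] at h7
    linarith
  have hKinv : (0:ℝ) ≤ K⁻¹ := inv_nonneg.mpr hK.le
  show pker γ b x y t * |y - x|^k
      ≤ (B*x^k) * (y^(b/γ-1) * Real.exp (-(1/(2*(γ*t))) * y))
        + B * (y^(b/γ-1+(k:ℝ)) * Real.exp (-(1/(2*(γ*t))) * y))
  calc pker γ b x y t * |y-x|^k
      ≤ pker γ b x y t * (x+y)^k := mul_le_mul_of_nonneg_left hpowle hp0
    _ ≤ ((γ*t)^(-(b/γ)) * Real.exp (-(x+y)/(γ*t)) * y^(b/γ-1)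
          * (K⁻¹ * Real.exp (Real.sqrt (8*(x*y))/(γ*t)))) * (x+y)^k := by
        refine mul_le_mul_of_nonneg_right ?_ (by positivity)
        unfold pker
        exact mul_le_mul_of_nonneg_left (tsum_le_exp hc hs (by positivity))
          (mul_nonneg (mul_nonneg hApos.le (Real.exp_pos _).le) hYpos.le)
    _ = ((γ*t)^(-(b/γ)) * y^(b/γ-1) * K⁻¹ * (x+y)^k)
          * (Real.exp (-(x+y)/(γ*t)) * Real.exp (Real.sqrt (8*(x*y))/(γ*t))) := by ring
    _ ≤ ((γ*t)^(-(b/γ)) * y^(b/γ-1) * K⁻¹ * (x+y)^k)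
          * (Real.exp (4*x/(γ*t)) * Real.exp (-(1/(2*(γ*t)))*y)) :=
        mul_le_mul_of_nonneg_left hE
          (mul_nonneg (mul_nonneg (mul_nonneg hApos.le hYpos.le) hKinv) (by positivity))
    _ ≤ ((γ*t)^(-(b/γ)) * y^(b/γ-1) * K⁻¹ * (2^k*(x^k+y^k)))
          * (Real.exp (4*x/(γ*t)) * Real.exp (-(1/(2*(γ*t)))*y)) := by
        refine mul_le_mul_of_nonneg_right ?_ (by positivity)
        exact mul_le_mul_of_nonneg_left hbin
          (mul_nonneg (mul_nonneg hApos.le hYpos.le) hKinv)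
    _ = (B*x^k) * (y^(b/γ-1) * Real.exp (-(1/(2*(γ*t))) * y))
          + B * (y^(b/γ-1+(k:ℝ)) * Real.exp (-(1/(2*(γ*t))) * y)) := by
        have hyk : y^(b/γ-1) * y^k = y^(b/γ-1+(k:ℝ)) := by
          rw [← Real.rpow_natCast y k, ← Real.rpow_add hy']
        rw [hB0, ← hyk]
        ring

/-- For `γ > 0`, `b > 0`, `k ≥ 1`, `x > 0`, `t > 0`:
`∫ p^{γ,b}(x,y,t)(y−x)^{k+1} dy = −x ∫ p^{γ,b}(x,y,t)(y−x)^k dy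
 + b t ∫ p^{γ,b+γ}(x,y,t)(y−x)^k dy + x ∫ p^{γ,b+2γ}(x,y,t)(y−x)^k dy`. -/
theorem stmt6 (γ b : ℝ) (hγ : 0 < γ) (hb : 0 < b) (k : ℕ) (hk : 1 ≤ k)
    (x t : ℝ) (hx : 0 < x) (ht : 0 < t) :
    (∫ y in Set.Ioi (0:ℝ), pker γ b x y t * (y - x) ^ (k + 1)) =
      -x * (∫ y in Set.Ioi (0:ℝ), pker γ b x y t * (y - x) ^ k) +
        b * t * (∫ y in Set.Ioi (0:ℝ), pker γ (b + γ) x y t * (y - x) ^ k) +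
          x * ∫ y in Set.Ioi (0:ℝ), pker γ (b + 2 * γ) x y t * (y - x) ^ k := by
  have hint0 := pker_integrable hγ hb hx ht k
  have hint1 := pker_integrable hγ (by linarith : (0:ℝ) < b+γ) hx ht k
  have hint2 := pker_integrable hγ (by linarith : (0:ℝ) < b+2*γ) hx ht k
  have hpt : Set.EqOn (fun y => pker γ b x y t * (y-x)^(k+1))
      (fun y => -x * (pker γ b x y t * (y-x)^k) + b*t*(pker γ (b+γ) x y t * (y-x)^k)
        + x*(pker γ (b+2*γ) x y t * (y-x)^k)) (Set.Ioi (0:ℝ)) := by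
    intro y hy
    have hy' : (0:ℝ) < y := hy
    have hrec := pker_rec (x := x) hγ hb ht hy'
    simp only []
    rw [pow_succ]
    linear_combination (y-x)^k * hrec
  rw [setIntegral_congr_fun measurableSet_Ioi hpt]
  have hI0 : Integrable (fun y => -x * (pker γ b x y t * (y-x)^k))
      (volume.restrict (Set.Ioi (0:ℝ))) := hint0.const_mul (-x)
  have hI1 : Integrable (fun y => b*t*(pker γ (b+γ) x y t * (y-x)^k))
      (volume.restrict (Set.Ioi (0:ℝ))) := hint1.const_mul (b*t)
  have hI2 : Integrable (fun y => x*(pker γ (b+2*γ) x y t * (y-x)^k))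
      (volume.restrict (Set.Ioi (0:ℝ))) := hint2.const_mul x
  have hI01 : Integrable (fun y => -x * (pker γ b x y t * (y-x)^k)
      + b*t*(pker γ (b+γ) x y t * (y-x)^k)) (volume.restrict (Set.Ioi (0:ℝ))) := hI0.add hI1
  rw [integral_add hI01 hI2, integral_add hI0 hI1,
    integral_const_mul, integral_const_mul, integral_const_mul]
end

section
/- Let γ > 0 and b > 0. Then for every x > 0 and t > 0 one has ∫_0^∞ p^{γ,b}(x,y,t) · (y − x)² dy = 2γtx + t²·b·(b + γ). -/
open MeasureTheory

namespace PkerAux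

lemma exp_tsum (u : ℝ) : ∑' m : ℕ, u ^ m / (m.factorial : ℝ) = Real.exp u := by
  rw [Real.exp_eq_exp_ℝ, NormedSpace.exp_eq_tsum_div]

lemma summable0 (u : ℝ) : Summable (fun m : ℕ => u ^ m / (m.factorial : ℝ)) :=
  Real.summable_pow_div_factorial u

lemma shift1 (u : ℝ) (m : ℕ) :
    ((m + 1 : ℕ) : ℝ) * (u ^ (m + 1) / ((m + 1).factorial : ℝ))
      = u * (u ^ m / (m.factorial : ℝ)) := by
  have hm : ((m.factorial : ℝ)) ≠ 0 := Nat.cast_ne_zero.mpr m.factorial_ne_zero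
  rw [Nat.factorial_succ, pow_succ]
  push_cast
  field_simp

lemma summable1 (u : ℝ) : Summable (fun m : ℕ => (m : ℝ) * (u ^ m / (m.factorial : ℝ))) := by
  rw [← summable_nat_add_iff 1]
  have h : (fun m : ℕ => ((m + 1 : ℕ) : ℝ) * (u ^ (m + 1) / ((m + 1).factorial : ℝ)))
      = fun m : ℕ => u * (u ^ m / (m.factorial : ℝ)) := funext fun m => shift1 u m
  exact h ▸ (summable0 u).mul_left u

lemma tsum1 (u : ℝ) :
    ∑' m : ℕ, (m : ℝ) * (u ^ m / (m.factorial : ℝ)) = u * Real.exp u := by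
  rw [Summable.tsum_eq_zero_add (summable1 u)]
  simp only [Nat.cast_zero, zero_mul, zero_add]
  rw [tsum_congr (fun m => shift1 u m), tsum_mul_left, exp_tsum]

lemma shift2 (u : ℝ) (m : ℕ) :
    ((m + 1 : ℕ) : ℝ) ^ 2 * (u ^ (m + 1) / ((m + 1).factorial : ℝ))
      = u * ((m : ℝ) * (u ^ m / (m.factorial : ℝ)) + u ^ m / (m.factorial : ℝ)) := by
  have hm : ((m.factorial : ℝ)) ≠ 0 := Nat.cast_ne_zero.mpr m.factorial_ne_zero
  rw [Nat.factorial_succ, pow_succ]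
  push_cast
  field_simp
  ring

lemma summable2 (u : ℝ) :
    Summable (fun m : ℕ => (m : ℝ) ^ 2 * (u ^ m / (m.factorial : ℝ))) := by
  rw [← summable_nat_add_iff 1]
  have h : (fun m : ℕ => ((m + 1 : ℕ) : ℝ) ^ 2 * (u ^ (m + 1) / ((m + 1).factorial : ℝ)))
      = fun m : ℕ => u * ((m : ℝ) * (u ^ m / (m.factorial : ℝ)) + u ^ m / (m.factorial : ℝ)) :=
    funext fun m => shift2 u m
  exact h ▸ ((summable1 u).add (summable0 u)).mul_left u

lemma tsum2 (u : ℝ) :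
    ∑' m : ℕ, (m : ℝ) ^ 2 * (u ^ m / (m.factorial : ℝ)) = (u ^ 2 + u) * Real.exp u := by
  rw [Summable.tsum_eq_zero_add (summable2 u)]
  simp only [Nat.cast_zero, zero_pow, zero_mul, zero_add, OfNat.ofNat_ne_zero, ne_eq,
    not_false_eq_true]
  rw [tsum_congr (fun m => shift2 u m), tsum_mul_left,
    Summable.tsum_add (summable1 u) (summable0 u), tsum1, exp_tsum]
  ring

lemma summable_poly (u A B D : ℝ) :
    Summable (fun m : ℕ => (A + B * m + D * (m : ℝ) ^ 2) * (u ^ m / (m.factorial : ℝ))) := by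
  have h : (fun m : ℕ => (A + B * m + D * (m : ℝ) ^ 2) * (u ^ m / (m.factorial : ℝ)))
      = fun m : ℕ => A * (u ^ m / (m.factorial : ℝ))
          + (B * ((m : ℝ) * (u ^ m / (m.factorial : ℝ)))
            + D * ((m : ℝ) ^ 2 * (u ^ m / (m.factorial : ℝ)))) := funext fun m => by ring
  rw [h]
  exact ((summable0 u).mul_left A).add
    (((summable1 u).mul_left B).add ((summable2 u).mul_left D))

lemma tsum_poly (u A B D : ℝ) :
    ∑' m : ℕ, (A + B * m + D * (m : ℝ) ^ 2) * (u ^ m / (m.factorial : ℝ))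
      = (A + B * u + D * (u ^ 2 + u)) * Real.exp u := by
  have h : (fun m : ℕ => (A + B * m + D * (m : ℝ) ^ 2) * (u ^ m / (m.factorial : ℝ)))
      = fun m : ℕ => A * (u ^ m / (m.factorial : ℝ))
          + (B * ((m : ℝ) * (u ^ m / (m.factorial : ℝ)))
            + D * ((m : ℝ) ^ 2 * (u ^ m / (m.factorial : ℝ)))) := funext fun m => by ring
  rw [tsum_congr (fun m => congrFun h m),
    Summable.tsum_add ((summable0 u).mul_left A)
      (((summable1 u).mul_left B).add ((summable2 u).mul_left D)),
    Summable.tsum_add ((summable1 u).mul_left B) ((summable2 u).mul_left D),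
    tsum_mul_left, tsum_mul_left, tsum_mul_left, exp_tsum, tsum1, tsum2]
  ring

lemma gamma_integrable {c a : ℝ} (hc : 0 < c) (ha : 0 < a) :
    IntegrableOn (fun y : ℝ => y ^ (a - 1) * Real.exp (-(c⁻¹ * y))) (Set.Ioi 0) := by
  have h := integrableOn_rpow_mul_exp_neg_mul_rpow (p := 1) (s := a - 1) (b := c⁻¹)
    (by linarith) (by norm_num) (inv_pos.mpr hc)
  simpa only [Real.rpow_one, neg_mul] using h

lemma gamma_value {c a : ℝ} (hc : 0 < c) (ha : 0 < a) :
    ∫ y in Set.Ioi (0 : ℝ), y ^ (a - 1) * Real.exp (-(c⁻¹ * y))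
      = Real.Gamma a * c ^ a := by
  rw [Real.integral_rpow_mul_exp_neg_mul_Ioi ha (inv_pos.mpr hc), one_div, inv_inv,
    mul_comm]

lemma key (c s x : ℝ) (hc : 0 < c) (hs : 0 < s) :
    IntegrableOn (fun y : ℝ => y ^ (s - 1) * Real.exp (-(c⁻¹ * y)) * (y - x) ^ 2)
        (Set.Ioi 0) ∧
      ∫ y in Set.Ioi (0 : ℝ), y ^ (s - 1) * Real.exp (-(c⁻¹ * y)) * (y - x) ^ 2
        = Real.Gamma s * c ^ s * (s * (s + 1) * c ^ 2 - 2 * x * s * c + x ^ 2) := by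
  have i1 := gamma_integrable hc (show (0:ℝ) < s + 2 by linarith)
  have i2 := gamma_integrable hc (show (0:ℝ) < s + 1 by linarith)
  have i3 := gamma_integrable hc hs
  have hpt : ∀ y ∈ Set.Ioi (0 : ℝ),
      y ^ (s - 1) * Real.exp (-(c⁻¹ * y)) * (y - x) ^ 2
        = y ^ (s + 2 - 1) * Real.exp (-(c⁻¹ * y))
            + ((-(2 * x)) * (y ^ (s + 1 - 1) * Real.exp (-(c⁻¹ * y)))
              + x ^ 2 * (y ^ (s - 1) * Real.exp (-(c⁻¹ * y)))) := by
    intro y hy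
    have hy' : (0 : ℝ) < y := hy
    have h1 : y ^ (s + 2 - 1) = y ^ (s - 1) * y ^ 2 := by
      rw [show s + 2 - 1 = (s - 1) + 2 by ring, Real.rpow_add hy', Real.rpow_two]
    have h2 : y ^ (s + 1 - 1) = y ^ (s - 1) * y := by
      rw [show s + 1 - 1 = (s - 1) + 1 by ring, Real.rpow_add hy', Real.rpow_one]
    rw [h1, h2]; ring
  have hcomb : IntegrableOn (fun y : ℝ =>
      y ^ (s + 2 - 1) * Real.exp (-(c⁻¹ * y))
        + ((-(2 * x)) * (y ^ (s + 1 - 1) * Real.exp (-(c⁻¹ * y)))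
          + x ^ 2 * (y ^ (s - 1) * Real.exp (-(c⁻¹ * y))))) (Set.Ioi 0) :=
    i1.add ((i2.const_mul (-(2 * x))).add (i3.const_mul (x ^ 2)))
  constructor
  · exact hcomb.congr_fun (fun y hy => (hpt y hy).symm) measurableSet_Ioi
  · have h2' : IntegrableOn (fun y : ℝ => (-(2 * x)) * (y ^ (s + 1 - 1) * Real.exp (-(c⁻¹ * y))))
        (Set.Ioi 0) := i2.const_mul _
    have h3' : IntegrableOn (fun y : ℝ => x ^ 2 * (y ^ (s - 1) * Real.exp (-(c⁻¹ * y))))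
        (Set.Ioi 0) := i3.const_mul _
    have h23 : IntegrableOn (fun y : ℝ => (-(2 * x)) * (y ^ (s + 1 - 1) * Real.exp (-(c⁻¹ * y)))
        + x ^ 2 * (y ^ (s - 1) * Real.exp (-(c⁻¹ * y)))) (Set.Ioi 0) := h2'.add h3'
    rw [setIntegral_congr_fun measurableSet_Ioi hpt,
      integral_add i1 h23, integral_add h2' h3',
      MeasureTheory.integral_const_mul, MeasureTheory.integral_const_mul,
      gamma_value hc (show (0:ℝ) < s + 2 by linarith),
      gamma_value hc (show (0:ℝ) < s + 1 by linarith), gamma_value hc hs]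
    have g1 : Real.Gamma (s + 1) = s * Real.Gamma s := Real.Gamma_add_one hs.ne'
    have g2 : Real.Gamma (s + 2) = (s + 1) * Real.Gamma (s + 1) := by
      rw [show s + 2 = (s + 1) + 1 by ring, Real.Gamma_add_one (by linarith)]
    have r1 : c ^ (s + 1) = c ^ s * c := by rw [Real.rpow_add hc, Real.rpow_one]
    have r2 : c ^ (s + 2) = c ^ s * c ^ 2 := by rw [Real.rpow_add hc, Real.rpow_two]
    rw [g2, g1, r2, r1]
    ring

/-- summand after splitting off constants -/
noncomputable def Fker (c ν x : ℝ) (m : ℕ) (y : ℝ) : ℝ :=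
  (c ^ (-ν) * Real.exp (-x / c) *
      (x ^ m / ((m.factorial : ℝ) * Real.Gamma ((m : ℝ) + ν) * c ^ (2 * m)))) *
    (y ^ (((m : ℝ) + ν) - 1) * Real.exp (-(c⁻¹ * y)) * (y - x) ^ 2)

lemma Fker_nonneg {c ν x : ℝ} (hc : 0 < c) (hν : 0 < ν) (hx : 0 < x) (m : ℕ)
    {y : ℝ} (hy : 0 < y) : 0 ≤ Fker c ν x m y := by
  unfold Fker
  have h1 : 0 < Real.Gamma ((m : ℝ) + ν) := Real.Gamma_pos_of_pos (by positivity)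
  positivity

lemma Fker_integrableOn (c ν x : ℝ) (hc : 0 < c) (hν : 0 < ν) (m : ℕ) :
    IntegrableOn (Fker c ν x m) (Set.Ioi 0) := by
  unfold Fker
  exact ((key c ((m : ℝ) + ν) x hc (by positivity)).1).const_mul _

lemma integral_Fker (c ν x : ℝ) (hc : 0 < c) (hν : 0 < ν) (m : ℕ) :
    ∫ y in Set.Ioi (0 : ℝ), Fker c ν x m y
      = Real.exp (-x / c) *
          (((((m : ℝ) + ν) * (((m : ℝ) + ν) + 1)) * c ^ 2 - 2 * x * ((m : ℝ) + ν) * c + x ^ 2) *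
            ((x / c) ^ m / (m.factorial : ℝ))) := by
  have hs : 0 < (m : ℝ) + ν := by positivity
  unfold Fker
  rw [MeasureTheory.integral_const_mul, (key c ((m : ℝ) + ν) x hc hs).2]
  have hg : Real.Gamma ((m : ℝ) + ν) ≠ 0 := (Real.Gamma_pos_of_pos hs).ne'
  have hm : ((m.factorial : ℝ)) ≠ 0 := Nat.cast_ne_zero.mpr m.factorial_ne_zero
  have hcm : (c : ℝ) ^ m ≠ 0 := pow_ne_zero _ hc.ne'
  have hcv : (0:ℝ) < c ^ ν := Real.rpow_pos_of_pos hc ν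
  have e' : c ^ ((m : ℝ) + ν) = c ^ m * c ^ ν := by
    rw [← Real.rpow_natCast c m, ← Real.rpow_add hc]
  rw [Real.rpow_neg hc.le, e', pow_mul, div_pow]
  field_simp
  ring

theorem aux (c ν x : ℝ) (hc : 0 < c) (hν : 0 < ν) (hx : 0 < x) :
    ∫ y in Set.Ioi (0 : ℝ),
      (c ^ (-ν) * Real.exp (-(x + y) / c) * y ^ (ν - 1) *
          ∑' m : ℕ, (x * y) ^ m / ((m.factorial : ℝ) * Real.Gamma ((m : ℝ) + ν) * c ^ (2 * m)))
        * (y - x) ^ 2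
      = 2 * c * x + c ^ 2 * ν * (ν + 1) := by
  have hrepr : ∀ y ∈ Set.Ioi (0 : ℝ),
      (c ^ (-ν) * Real.exp (-(x + y) / c) * y ^ (ν - 1) *
          ∑' m : ℕ, (x * y) ^ m / ((m.factorial : ℝ) * Real.Gamma ((m : ℝ) + ν) * c ^ (2 * m)))
        * (y - x) ^ 2 = ∑' m : ℕ, Fker c ν x m y := by
    intro y hy
    have hy' : (0 : ℝ) < y := hy
    rw [← tsum_mul_left, ← tsum_mul_right]
    refine tsum_congr fun m => ?_
    have e2 : Real.exp (-(x + y) / c) = Real.exp (-x / c) * Real.exp (-(c⁻¹ * y)) := by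
      rw [← Real.exp_add]
      congr 1
      field_simp
      ring
    have e3 : y ^ (ν - 1) * (y : ℝ) ^ m = y ^ (((m : ℝ) + ν) - 1) := by
      rw [← Real.rpow_natCast y m, ← Real.rpow_add hy',
        show ν - 1 + (m : ℝ) = ((m : ℝ) + ν) - 1 by ring]
    unfold Fker
    calc c ^ (-ν) * Real.exp (-(x + y) / c) * y ^ (ν - 1) *
          ((x * y) ^ m / ((m.factorial : ℝ) * Real.Gamma ((m : ℝ) + ν) * c ^ (2 * m)))
          * (y - x) ^ 2
        = (y ^ (ν - 1) * (y : ℝ) ^ m) * (Real.exp (-(x + y) / c) *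
            (c ^ (-ν) * (x ^ m / ((m.factorial : ℝ) * Real.Gamma ((m : ℝ) + ν) * c ^ (2 * m)))
              * (y - x) ^ 2)) := by
          rw [mul_pow]; ring
      _ = _ := by rw [e3, e2]; ring
  rw [setIntegral_congr_fun measurableSet_Ioi hrepr]
  have hFint : ∀ m : ℕ, IntegrableOn (Fker c ν x m) (Set.Ioi 0) :=
    fun m => Fker_integrableOn c ν x hc hν m
  have hnorm : ∀ m : ℕ, ∫ y in Set.Ioi (0 : ℝ), ‖Fker c ν x m y‖
      = ∫ y in Set.Ioi (0 : ℝ), Fker c ν x m y :=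
    fun m => setIntegral_congr_fun measurableSet_Ioi
      (fun y hy => Real.norm_of_nonneg (Fker_nonneg hc hν hx m hy))
  have hval : ∀ m : ℕ, ∫ y in Set.Ioi (0 : ℝ), Fker c ν x m y
      = Real.exp (-x / c) *
          (((ν * (ν + 1) * c ^ 2 - 2 * x * ν * c + x ^ 2)
              + ((2 * ν + 1) * c ^ 2 - 2 * x * c) * m + c ^ 2 * (m : ℝ) ^ 2) *
            ((x / c) ^ m / (m.factorial : ℝ))) := by
    intro m
    rw [integral_Fker c ν x hc hν m]
    ring
  have hFsum : Summable fun m : ℕ => ∫ y in Set.Ioi (0 : ℝ), ‖Fker c ν x m y‖ := by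
    have hs := (summable_poly (x / c) (ν * (ν + 1) * c ^ 2 - 2 * x * ν * c + x ^ 2)
      ((2 * ν + 1) * c ^ 2 - 2 * x * c) (c ^ 2)).mul_left (Real.exp (-x / c))
    exact hs.congr fun m => by rw [← hval m, ← hnorm m]
  rw [← MeasureTheory.integral_tsum_of_summable_integral_norm hFint hFsum]
  rw [tsum_congr hval, tsum_mul_left, tsum_poly]
  have hee : Real.exp (-x / c) * Real.exp (x / c) = 1 := by
    rw [← Real.exp_add, show -x / c + x / c = 0 by ring, Real.exp_zero]
  have hc' : c ≠ 0 := hc.ne'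
  calc Real.exp (-x / c) *
        (((ν * (ν + 1) * c ^ 2 - 2 * x * ν * c + x ^ 2)
            + ((2 * ν + 1) * c ^ 2 - 2 * x * c) * (x / c)
            + c ^ 2 * ((x / c) ^ 2 + x / c)) * Real.exp (x / c))
      = ((ν * (ν + 1) * c ^ 2 - 2 * x * ν * c + x ^ 2)
            + ((2 * ν + 1) * c ^ 2 - 2 * x * c) * (x / c)
            + c ^ 2 * ((x / c) ^ 2 + x / c)) * (Real.exp (-x / c) * Real.exp (x / c)) := by
        ring
    _ = 2 * c * x + c ^ 2 * ν * (ν + 1) := by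
        rw [hee, mul_one]
        field_simp
        ring

end PkerAux

/-- For `γ > 0`, `b > 0`, `x > 0` and `t > 0`,
`∫_0^∞ p^{γ,b}(x,y,t)(y − x)² dy = 2γtx + t²b(b + γ)`. -/
theorem stmt7 (γ b : ℝ) (hγ : 0 < γ) (hb : 0 < b) (x t : ℝ) (hx : 0 < x) (ht : 0 < t) :
    ∫ y in Set.Ioi (0:ℝ), pker γ b x y t * (y - x) ^ 2 =
      2 * γ * t * x + t ^ 2 * b * (b + γ) := by
  have h := PkerAux.aux (γ * t) (b / γ) x (by positivity) (by positivity) hx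
  simp only [pker]
  rw [h]
  field_simp
end

section
/- Let γ > 0 and b > 0. Then for every x > 0 and t > 0 one has ∫_0^∞ p^{γ,b}(x,y,t) · |y − x| dy ≤ √(2γtx + t²·b·(b + γ)). -/
open MeasureTheory

open Real Set Filter
open scoped NNReal ENNReal

lemma aux_integrable_tsum {α : Type*} [MeasurableSpace α] {μ : Measure α} {f : ℕ → α → ℝ}
    (hf : ∀ i, Integrable (f i) μ) (hsum : Summable fun i => ∫ a, ‖f i a‖ ∂μ) :
    Integrable (fun a => ∑' i, f i a) μ := by
  have hf' : ∑' i, ∫⁻ a, ‖f i a‖₊ ∂μ ≠ ∞ := by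
    have : ∀ i, ∫⁻ a, ‖f i a‖₊ ∂μ = ENNReal.ofReal (∫ a, ‖f i a‖ ∂μ) := fun i =>
      (ofReal_integral_norm_eq_lintegral_enorm (hf i)).symm
    simp_rw [this]
    rw [← ENNReal.ofReal_tsum_of_nonneg (fun i => integral_nonneg fun a => norm_nonneg _) hsum]
    exact ENNReal.ofReal_ne_top
  have hf'' : ∀ i, AEMeasurable (fun x => (‖f i x‖₊ : ℝ≥0∞)) μ := fun i => (hf i).1.aemeasurable.enorm
  have hhh : ∀ᵐ a ∂μ, Summable fun n => (‖f n a‖₊ : ℝ) := by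
    rw [← lintegral_tsum hf''] at hf'
    refine (ae_lt_top' (AEMeasurable.ennreal_tsum hf'') hf').mono fun x hx => ?_
    rw [← ENNReal.tsum_coe_ne_top_iff_summable_coe]
    exact hx.ne
  constructor
  · refine aestronglyMeasurable_of_tendsto_ae Filter.atTop
      (f := fun n a => ∑ i ∈ Finset.range n, f i a)
      (fun n => Finset.aestronglyMeasurable_fun_sum _ fun i _ => (hf i).1) ?_
    filter_upwards [hhh] with a ha
    have : Summable fun i => f i a := by
      refine Summable.of_norm ?_
      simpa [coe_nnnorm] using ha
    exact this.hasSum.tendsto_sum_nat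
  · refine lt_of_le_of_lt ?_ hf'.lt_top
    rw [← lintegral_tsum hf'']
    refine lintegral_mono_ae (hhh.mono fun a ha => ?_)
    have hsum' : Summable fun i => ‖f i a‖₊ := by rwa [← NNReal.summable_coe]
    calc (‖∑' i, f i a‖₊ : ℝ≥0∞) ≤ ((∑' i, ‖f i a‖₊ : ℝ≥0) : ℝ≥0∞) :=
          ENNReal.coe_le_coe.2 (nnnorm_tsum_le hsum')
      _ = ∑' i, (‖f i a‖₊ : ℝ≥0∞) := ENNReal.coe_tsum hsum'

lemma aux_sum_exp (u : ℝ) : ∑' m : ℕ, u ^ m / m.factorial = Real.exp u := by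
  rw [Real.exp_eq_exp_ℝ, NormedSpace.exp_eq_tsum_div]

lemma aux_shift1 (u : ℝ) : (fun m : ℕ => ((m + 1 : ℕ) : ℝ) * u ^ (m + 1) / (m + 1).factorial)
    = fun m : ℕ => u * (u ^ m / m.factorial) := by
  funext m
  have h : ((m + 1).factorial : ℝ) = (m + 1) * m.factorial := by
    rw [Nat.factorial_succ]; push_cast; ring
  have hm : ((m : ℝ) + 1) ≠ 0 := by positivity
  have hf : (m.factorial : ℝ) ≠ 0 := by positivity
  rw [h]
  push_cast
  field_simp
  ring

lemma aux_summable1 (u : ℝ) : Summable fun m : ℕ => (m : ℝ) * u ^ m / m.factorial := by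
  rw [← summable_nat_add_iff 1]
  rw [show (fun m : ℕ => ((m + 1 : ℕ) : ℝ) * u ^ (m + 1) / (m + 1).factorial)
      = fun m : ℕ => u * (u ^ m / m.factorial) from aux_shift1 u]
  exact (Real.summable_pow_div_factorial u).mul_left u

lemma aux_sum1 (u : ℝ) : ∑' m : ℕ, (m : ℝ) * u ^ m / m.factorial = u * Real.exp u := by
  rw [Summable.tsum_eq_zero_add (aux_summable1 u)]
  simp only [Nat.cast_zero, zero_mul, zero_div, zero_add]
  rw [show (fun m : ℕ => ((m + 1 : ℕ) : ℝ) * u ^ (m + 1) / (m + 1).factorial)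
      = fun m : ℕ => u * (u ^ m / m.factorial) from aux_shift1 u]
  rw [tsum_mul_left, aux_sum_exp]

lemma aux_shift2 (u : ℝ) : (fun m : ℕ => ((m + 1 : ℕ) : ℝ)^2 * u ^ (m + 1) / (m + 1).factorial)
    = fun m : ℕ => u * ((m:ℝ) * u ^ m / m.factorial) + u * (u ^ m / m.factorial) := by
  funext m
  have h : ((m + 1).factorial : ℝ) = (m + 1) * m.factorial := by
    rw [Nat.factorial_succ]; push_cast; ring
  have hm : ((m : ℝ) + 1) ≠ 0 := by positivity
  have hf : (m.factorial : ℝ) ≠ 0 := by positivity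
  rw [h]
  push_cast
  field_simp
  ring

lemma aux_summable2 (u : ℝ) : Summable fun m : ℕ => (m : ℝ)^2 * u ^ m / m.factorial := by
  rw [← summable_nat_add_iff 1]
  rw [show (fun m : ℕ => ((m + 1 : ℕ) : ℝ)^2 * u ^ (m + 1) / (m + 1).factorial)
      = fun m : ℕ => u * ((m:ℝ) * u ^ m / m.factorial) + u * (u ^ m / m.factorial) from aux_shift2 u]
  exact ((aux_summable1 u).mul_left u).add ((Real.summable_pow_div_factorial u).mul_left u)

lemma aux_sum2 (u : ℝ) : ∑' m : ℕ, (m : ℝ)^2 * u ^ m / m.factorial = (u^2 + u) * Real.exp u := by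
  rw [Summable.tsum_eq_zero_add (aux_summable2 u)]
  simp only [Nat.cast_zero, zero_mul, zero_div, zero_add, ne_eq, OfNat.ofNat_ne_zero,
    not_false_eq_true, zero_pow]
  rw [show (fun m : ℕ => ((m + 1 : ℕ) : ℝ)^2 * u ^ (m + 1) / (m + 1).factorial)
      = fun m : ℕ => u * ((m:ℝ) * u ^ m / m.factorial) + u * (u ^ m / m.factorial) from aux_shift2 u]
  rw [Summable.tsum_add ((aux_summable1 u).mul_left u) ((Real.summable_pow_div_factorial u).mul_left u)]
  rw [tsum_mul_left, tsum_mul_left, aux_sum_exp, aux_sum1]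
  ring

lemma core_moment (β c x : ℝ) (hβ : 0 < β) (hc : 0 < c) (hx : 0 < x) (k : ℕ)
    (hV : Summable fun m : ℕ => Real.exp (-(x / c)) * ((x / c) ^ m / m.factorial) *
      (Real.Gamma ((m : ℝ) + β + k) / Real.Gamma ((m : ℝ) + β)) * c ^ k) :
    IntegrableOn (fun y : ℝ =>
      (c ^ (-β) * Real.exp (-(x + y) / c) * y ^ (β - 1) *
        ∑' m : ℕ, (x * y) ^ m / ((m.factorial : ℝ) * Real.Gamma ((m : ℝ) + β) * c ^ (2 * m)))
        * y ^ k) (Ioi 0) ∧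
    (∫ y in Ioi 0,
      (c ^ (-β) * Real.exp (-(x + y) / c) * y ^ (β - 1) *
        ∑' m : ℕ, (x * y) ^ m / ((m.factorial : ℝ) * Real.Gamma ((m : ℝ) + β) * c ^ (2 * m)))
        * y ^ k) =
      ∑' m : ℕ, Real.exp (-(x / c)) * ((x / c) ^ m / m.factorial) *
        (Real.Gamma ((m : ℝ) + β + k) / Real.Gamma ((m : ℝ) + β)) * c ^ k := by
  set F : ℕ → ℝ → ℝ := fun m y =>
    (c ^ (-β) * Real.exp (-(x / c)) *
      (x ^ m / ((m.factorial : ℝ) * Real.Gamma ((m : ℝ) + β) * c ^ (2 * m)))) *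
    (y ^ ((m : ℝ) + β + k - 1) * Real.exp (-(c⁻¹ * y))) with hF
  have hGpos : ∀ m : ℕ, 0 < Real.Gamma ((m : ℝ) + β) := fun m =>
    Real.Gamma_pos_of_pos (by positivity)
  have hGpos' : ∀ m : ℕ, 0 < Real.Gamma ((m : ℝ) + β + k) := fun m =>
    Real.Gamma_pos_of_pos (by positivity)
  -- pointwise identity on Ioi 0
  have key : ∀ y ∈ Ioi (0:ℝ),
      (c ^ (-β) * Real.exp (-(x + y) / c) * y ^ (β - 1) *
        ∑' m : ℕ, (x * y) ^ m / ((m.factorial : ℝ) * Real.Gamma ((m : ℝ) + β) * c ^ (2 * m)))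
        * y ^ k = ∑' m : ℕ, F m y := by
    intro y hy
    have hy' : (0:ℝ) < y := hy
    rw [mul_right_comm, ← tsum_mul_left]
    refine tsum_congr fun m => ?_
    have e1 : y ^ ((m : ℝ) + β + (k:ℝ) - 1) = y ^ (m:ℕ) * y ^ (β - 1) * y ^ (k:ℕ) := by
      rw [← Real.rpow_natCast y m, ← Real.rpow_natCast y k,
        ← Real.rpow_add hy', ← Real.rpow_add hy']
      congr 1
      ring
    have e2 : Real.exp (-(x + y) / c) = Real.exp (-(x / c)) * Real.exp (-(c⁻¹ * y)) := by
      rw [← Real.exp_add]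
      congr 1
      field_simp
      ring
    rw [hF]
    simp only
    rw [e1, e2, mul_pow]
    ring
  -- integrability of each F m
  have hFint : ∀ m : ℕ, IntegrableOn (F m) (Ioi 0) := by
    intro m
    have hpos : (0:ℝ) < (m : ℝ) + β + k := by positivity
    have hs : (-1:ℝ) < (m : ℝ) + β + k - 1 := by linarith
    have base := integrableOn_rpow_mul_exp_neg_mul_rpow hs (p := 1) one_pos (inv_pos.2 hc)
    have base' : IntegrableOn
        (fun y : ℝ => y ^ ((m : ℝ) + β + k - 1) * Real.exp (-(c⁻¹ * y))) (Ioi 0) := by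
      refine base.congr_fun (fun y hy => ?_) measurableSet_Ioi
      simp only [Real.rpow_one, neg_mul]
    exact base'.const_mul _
  -- value of each integral
  have hFval : ∀ m : ℕ, ∫ y in Ioi 0, F m y =
      Real.exp (-(x / c)) * ((x / c) ^ m / m.factorial) *
        (Real.Gamma ((m : ℝ) + β + k) / Real.Gamma ((m : ℝ) + β)) * c ^ k := by
    intro m
    have hpos : (0:ℝ) < (m : ℝ) + β + k := by positivity
    have hint : ∫ y in Ioi (0:ℝ), y ^ ((m : ℝ) + β + k - 1) * Real.exp (-(c⁻¹ * y)) =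
        (1 / c⁻¹) ^ ((m : ℝ) + β + k) * Real.Gamma ((m : ℝ) + β + k) :=
      Real.integral_rpow_mul_exp_neg_mul_Ioi hpos (inv_pos.2 hc)
    rw [hF]
    simp only
    rw [MeasureTheory.integral_const_mul, hint, one_div, inv_inv]
    -- now pure algebra with rpow
    have hcr : c ^ (-β) * c ^ ((m : ℝ) + β + (k:ℝ)) = (c ^ (m + k : ℕ) : ℝ) := by
      rw [← Real.rpow_natCast c (m + k), ← Real.rpow_add hc]
      congr 1
      push_cast
      ring
    have hfac : (m.factorial : ℝ) ≠ 0 := by positivity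
    have hG : Real.Gamma ((m : ℝ) + β) ≠ 0 := (hGpos m).ne'
    have hc' : (c:ℝ) ≠ 0 := hc.ne'
    rw [div_pow]
    field_simp
    linear_combination (c ^ m) * hcr
  have hFnn : ∀ m : ℕ, ∀ y ∈ Ioi (0:ℝ), 0 ≤ F m y := by
    intro m y hy
    have hy' : (0:ℝ) < y := hy
    rw [hF]
    simp only
    have h1 : (0:ℝ) ≤ c ^ (-β) := (Real.rpow_pos_of_pos hc _).le
    have h2 : (0:ℝ) ≤ x ^ m / ((m.factorial : ℝ) * Real.Gamma ((m : ℝ) + β) * c ^ (2 * m)) := by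
      apply div_nonneg (pow_nonneg hx.le m)
      have hg := hGpos m
      positivity
    have h3 : (0:ℝ) ≤ y ^ ((m : ℝ) + β + k - 1) := (Real.rpow_pos_of_pos hy' _).le
    exact mul_nonneg (mul_nonneg (mul_nonneg h1 (Real.exp_pos _).le) h2)
      (mul_nonneg h3 (Real.exp_pos _).le)
  have hFnorm : ∀ m : ℕ, ∫ y in Ioi 0, ‖F m y‖ = ∫ y in Ioi 0, F m y := fun m =>
    setIntegral_congr_fun measurableSet_Ioi fun y hy => by
      rw [Real.norm_eq_abs, abs_of_nonneg (hFnn m y hy)]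
  have hnormsum : Summable fun m : ℕ => ∫ y in Ioi 0, ‖F m y‖ := by
    simp_rw [hFnorm, hFval]
    exact hV
  have hInt : Integrable (fun y => ∑' m, F m y) (volume.restrict (Ioi 0)) :=
    aux_integrable_tsum hFint hnormsum
  have heq : EqOn (fun y : ℝ =>
      (c ^ (-β) * Real.exp (-(x + y) / c) * y ^ (β - 1) *
        ∑' m : ℕ, (x * y) ^ m / ((m.factorial : ℝ) * Real.Gamma ((m : ℝ) + β) * c ^ (2 * m)))
        * y ^ k) (fun y => ∑' m, F m y) (Ioi 0) := fun y hy => key y hy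
  constructor
  · refine hInt.congr ?_
    filter_upwards [ae_restrict_mem measurableSet_Ioi] with y hy using (key y hy).symm
  · rw [setIntegral_congr_fun measurableSet_Ioi heq,
      ← integral_tsum_of_summable_integral_norm hFint hnormsum]
    exact tsum_congr hFval


section moments
variable (γ b x t : ℝ)

lemma moment0 (hγ : 0 < γ) (hb : 0 < b) (hx : 0 < x) (ht : 0 < t) :
    IntegrableOn (fun y : ℝ => pker γ b x y t * y ^ (0:ℕ)) (Ioi 0) ∧
    ∫ y in Ioi 0, pker γ b x y t * y ^ (0:ℕ) = 1 := by
  have hc : 0 < γ * t := mul_pos hγ ht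
  have hβ : 0 < b / γ := div_pos hb hγ
  have hE : Real.exp (-(x/(γ*t))) * Real.exp (x/(γ*t)) = 1 := by
    rw [← Real.exp_add, neg_add_cancel, Real.exp_zero]
  have hfun : (fun m : ℕ => Real.exp (-(x/(γ*t))) * ((x/(γ*t))^m / m.factorial) *
      (Real.Gamma ((m:ℝ) + b/γ + (0:ℕ)) / Real.Gamma ((m:ℝ) + b/γ)) * (γ*t) ^ (0:ℕ))
      = fun m : ℕ => Real.exp (-(x/(γ*t))) * ((x/(γ*t))^m / m.factorial) := by
    funext m
    have h := (Real.Gamma_pos_of_pos (show (0:ℝ) < (m:ℝ) + b/γ by positivity)).ne'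
    simp [div_self h]
  have hV : Summable fun m : ℕ => Real.exp (-(x/(γ*t))) * ((x/(γ*t))^m / m.factorial) *
      (Real.Gamma ((m:ℝ) + b/γ + (0:ℕ)) / Real.Gamma ((m:ℝ) + b/γ)) * (γ*t) ^ (0:ℕ) := by
    rw [hfun]
    exact (Real.summable_pow_div_factorial _).mul_left _
  obtain ⟨hint, hval⟩ := core_moment (b/γ) (γ*t) x hβ hc hx 0 hV
  refine ⟨hint, ?_⟩
  rw [hfun, tsum_mul_left, aux_sum_exp, hE] at hval
  exact hval

lemma moment1 (hγ : 0 < γ) (hb : 0 < b) (hx : 0 < x) (ht : 0 < t) :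
    IntegrableOn (fun y : ℝ => pker γ b x y t * y ^ (1:ℕ)) (Ioi 0) ∧
    ∫ y in Ioi 0, pker γ b x y t * y ^ (1:ℕ) = x + b * t := by
  have hc : 0 < γ * t := mul_pos hγ ht
  have hβ : 0 < b / γ := div_pos hb hγ
  have hE : Real.exp (-(x/(γ*t))) * Real.exp (x/(γ*t)) = 1 := by
    rw [← Real.exp_add, neg_add_cancel, Real.exp_zero]
  have hfun : (fun m : ℕ => Real.exp (-(x/(γ*t))) * ((x/(γ*t))^m / m.factorial) *
      (Real.Gamma ((m:ℝ) + b/γ + (1:ℕ)) / Real.Gamma ((m:ℝ) + b/γ)) * (γ*t) ^ (1:ℕ))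
      = fun m : ℕ => (Real.exp (-(x/(γ*t))) * (γ*t) * (b/γ)) * ((x/(γ*t))^m / m.factorial)
        + (Real.exp (-(x/(γ*t))) * (γ*t)) * ((m:ℝ) * (x/(γ*t)) ^ m / m.factorial) := by
    funext m
    have hpos : (0:ℝ) < (m:ℝ) + b/γ := by positivity
    have hG := (Real.Gamma_pos_of_pos hpos).ne'
    have h1 : Real.Gamma ((m:ℝ) + b/γ + ((1:ℕ):ℝ)) = ((m:ℝ) + b/γ) * Real.Gamma ((m:ℝ) + b/γ) := by
      rw [Nat.cast_one, Real.Gamma_add_one hpos.ne']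
    rw [h1]
    field_simp
    ring
  have hV : Summable fun m : ℕ => Real.exp (-(x/(γ*t))) * ((x/(γ*t))^m / m.factorial) *
      (Real.Gamma ((m:ℝ) + b/γ + (1:ℕ)) / Real.Gamma ((m:ℝ) + b/γ)) * (γ*t) ^ (1:ℕ) := by
    rw [hfun]
    exact ((Real.summable_pow_div_factorial _).mul_left _).add
      ((aux_summable1 _).mul_left _)
  obtain ⟨hint, hval⟩ := core_moment (b/γ) (γ*t) x hβ hc hx 1 hV
  refine ⟨hint, ?_⟩
  rw [hfun, Summable.tsum_add ((Real.summable_pow_div_factorial _).mul_left _)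
      ((aux_summable1 _).mul_left _), tsum_mul_left, tsum_mul_left,
    aux_sum_exp, aux_sum1] at hval
  refine Eq.trans hval ?_
  have hγ' : γ ≠ 0 := hγ.ne'
  have ht' : t ≠ 0 := ht.ne'
  have hbt : (γ*t)*(b/γ) = b*t := by field_simp
  have hxx : (γ*t)*(x/(γ*t)) = x := by field_simp
  linear_combination (Real.exp (-(x / (γ*t))) * Real.exp (x / (γ*t))) * hbt
    + (Real.exp (-(x / (γ*t))) * Real.exp (x / (γ*t))) * hxx + (x + b*t) * hE

lemma moment2 (hγ : 0 < γ) (hb : 0 < b) (hx : 0 < x) (ht : 0 < t) :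
    IntegrableOn (fun y : ℝ => pker γ b x y t * y ^ (2:ℕ)) (Ioi 0) ∧
    ∫ y in Ioi 0, pker γ b x y t * y ^ (2:ℕ)
      = x^2 + 2*(b+γ)*t*x + b*(b+γ)*t^2 := by
  have hc : 0 < γ * t := mul_pos hγ ht
  have hβ : 0 < b / γ := div_pos hb hγ
  have hfun : (fun m : ℕ => Real.exp (-(x/(γ*t))) * ((x/(γ*t))^m / m.factorial) *
      (Real.Gamma ((m:ℝ) + b/γ + (2:ℕ)) / Real.Gamma ((m:ℝ) + b/γ)) * (γ*t) ^ (2:ℕ))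
      = fun m : ℕ =>
        (Real.exp (-(x/(γ*t))) * (γ*t)^2 * ((b/γ)^2 + b/γ)) * ((x/(γ*t))^m / m.factorial)
        + ((Real.exp (-(x/(γ*t))) * (γ*t)^2 * (2*(b/γ)+1)) * ((m:ℝ) * (x/(γ*t)) ^ m / m.factorial)
        + (Real.exp (-(x/(γ*t))) * (γ*t)^2) * ((m:ℝ)^2 * (x/(γ*t)) ^ m / m.factorial)) := by
    funext m
    have hpos : (0:ℝ) < (m:ℝ) + b/γ := by positivity
    have hpos1 : ((m:ℝ) + b/γ + 1) ≠ 0 := by positivity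
    have hG := (Real.Gamma_pos_of_pos hpos).ne'
    have h1 : Real.Gamma ((m:ℝ) + b/γ + ((2:ℕ):ℝ))
        = ((m:ℝ) + b/γ + 1) * (((m:ℝ) + b/γ) * Real.Gamma ((m:ℝ) + b/γ)) := by
      rw [show (m:ℝ) + b/γ + ((2:ℕ):ℝ) = ((m:ℝ) + b/γ + 1) + 1 by push_cast; ring,
        Real.Gamma_add_one hpos1, Real.Gamma_add_one hpos.ne']
    rw [h1]
    field_simp
    ring
  have hsummables : Summable (fun m : ℕ =>
        (Real.exp (-(x/(γ*t))) * (γ*t)^2 * (2*(b/γ)+1)) * ((m:ℝ) * (x/(γ*t)) ^ m / m.factorial)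
        + (Real.exp (-(x/(γ*t))) * (γ*t)^2) * ((m:ℝ)^2 * (x/(γ*t)) ^ m / m.factorial)) :=
    ((aux_summable1 _).mul_left _).add ((aux_summable2 _).mul_left _)
  have hV : Summable fun m : ℕ => Real.exp (-(x/(γ*t))) * ((x/(γ*t))^m / m.factorial) *
      (Real.Gamma ((m:ℝ) + b/γ + (2:ℕ)) / Real.Gamma ((m:ℝ) + b/γ)) * (γ*t) ^ (2:ℕ) := by
    rw [hfun]
    exact ((Real.summable_pow_div_factorial _).mul_left _).add hsummables
  obtain ⟨hint, hval⟩ := core_moment (b/γ) (γ*t) x hβ hc hx 2 hV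
  refine ⟨hint, ?_⟩
  rw [hfun, Summable.tsum_add ((Real.summable_pow_div_factorial _).mul_left _) hsummables,
    Summable.tsum_add ((aux_summable1 _).mul_left _) ((aux_summable2 _).mul_left _),
    tsum_mul_left, tsum_mul_left, tsum_mul_left,
    aux_sum_exp, aux_sum1, aux_sum2] at hval
  refine Eq.trans hval ?_
  have hγ' : γ ≠ 0 := hγ.ne'
  have ht' : t ≠ 0 := ht.ne'
  have hE : Real.exp (-(x/(γ*t))) * Real.exp (x/(γ*t)) = 1 := by
    rw [← Real.exp_add, neg_add_cancel, Real.exp_zero]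
  have hA : (γ*t)^2*((b/γ)^2+(b/γ)) = b*(b+γ)*t^2 := by field_simp
  have hB : (γ*t)^2*((2*(b/γ)+1)*(x/(γ*t))) = (2*b+γ)*t*x := by field_simp
  have hC : (γ*t)^2*((x/(γ*t))^2 + (x/(γ*t))) = x^2 + γ*t*x := by field_simp
  linear_combination (Real.exp (-(x / (γ*t))) * Real.exp (x / (γ*t))) * (hA + hB + hC)
    + (x^2+2*(b+γ)*t*x+b*(b+γ)*t^2) * hE

end moments

/-- For `γ > 0`, `b > 0`, `x > 0` and `t > 0`,
`∫_0^∞ p^{γ,b}(x,y,t) |y − x| dy ≤ √(2γtx + t²b(b + γ))`. -/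
theorem stmt8 (γ b : ℝ) (hγ : 0 < γ) (hb : 0 < b) (x t : ℝ) (hx : 0 < x) (ht : 0 < t) :
    (∫ y in Set.Ioi (0:ℝ), pker γ b x y t * |y - x|) ≤
      Real.sqrt (2 * γ * t * x + t ^ 2 * b * (b + γ)) := by
  have hM : 0 < 2 * γ * t * x + t ^ 2 * b * (b + γ) := by positivity
  set s := Real.sqrt (2 * γ * t * x + t ^ 2 * b * (b + γ)) with hsdef
  have hs0 : 0 < s := Real.sqrt_pos.mpr hM
  have hs2 : s ^ 2 = 2 * γ * t * x + t ^ 2 * b * (b + γ) := Real.sq_sqrt hM.le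
  obtain ⟨hi0, hv0⟩ := moment0 γ b x t hγ hb hx ht
  obtain ⟨hi1, hv1⟩ := moment1 γ b x t hγ hb hx ht
  obtain ⟨hi2, hv2⟩ := moment2 γ b x t hγ hb hx ht
  have hknn : ∀ y ∈ Ioi (0:ℝ), 0 ≤ pker γ b x y t := by
    intro y hy
    have hy' : (0:ℝ) < y := hy
    simp only [pker]
    refine mul_nonneg (mul_nonneg (mul_nonneg ?_ (Real.exp_pos _).le) ?_) ?_
    · exact Real.rpow_nonneg (mul_pos hγ ht).le _
    · exact Real.rpow_nonneg hy'.le _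
    · refine tsum_nonneg fun m => ?_
      apply div_nonneg (pow_nonneg (mul_nonneg hx.le hy'.le) m)
      have h := Real.Gamma_pos_of_pos (show (0:ℝ) < (m:ℝ) + b/γ by positivity)
      positivity
  have hgint : Integrable (fun y : ℝ =>
      (s/2 + x^2/(2*s)) * (pker γ b x y t * y ^ (0:ℕ))
      + (-(x/s)) * (pker γ b x y t * y ^ (1:ℕ))
      + (1/(2*s)) * (pker γ b x y t * y ^ (2:ℕ))) (volume.restrict (Ioi 0)) :=
    ((hi0.const_mul _).add (hi1.const_mul _)).add (hi2.const_mul _)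
  have hbound : ∀ y ∈ Ioi (0:ℝ), pker γ b x y t * |y - x| ≤
      (s/2 + x^2/(2*s)) * (pker γ b x y t * y ^ (0:ℕ))
      + (-(x/s)) * (pker γ b x y t * y ^ (1:ℕ))
      + (1/(2*s)) * (pker γ b x y t * y ^ (2:ℕ)) := by
    intro y hy
    have h1 : |y - x| ≤ s/2 + (y - x)^2/(2*s) := by
      rw [show s/2 + (y - x)^2/(2*s) = (s*s + (y - x)^2)/(2*s) by field_simp]
      rw [le_div_iff₀ (by positivity : (0:ℝ) < 2*s)]
      nlinarith [sq_nonneg (|y - x| - s), sq_abs (y - x), abs_nonneg (y - x)]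
    calc pker γ b x y t * |y - x| ≤ pker γ b x y t * (s/2 + (y - x)^2/(2*s)) :=
          mul_le_mul_of_nonneg_left h1 (hknn y hy)
      _ = _ := by ring
  have hle : ∫ y in Ioi (0:ℝ), pker γ b x y t * |y - x| ≤
      ∫ y in Ioi (0:ℝ), ((s/2 + x^2/(2*s)) * (pker γ b x y t * y ^ (0:ℕ))
      + (-(x/s)) * (pker γ b x y t * y ^ (1:ℕ))
      + (1/(2*s)) * (pker γ b x y t * y ^ (2:ℕ))) := by
    refine integral_mono_of_nonneg ?_ hgint ?_
    · filter_upwards [ae_restrict_mem measurableSet_Ioi] with y hy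
      exact mul_nonneg (hknn y hy) (abs_nonneg _)
    · filter_upwards [ae_restrict_mem measurableSet_Ioi] with y hy using hbound y hy
  refine hle.trans ?_
  have ha : Integrable (fun y : ℝ => (s/2 + x^2/(2*s)) * (pker γ b x y t * y ^ (0:ℕ))
      + (-(x/s)) * (pker γ b x y t * y ^ (1:ℕ))) (volume.restrict (Ioi 0)) :=
    (hi0.const_mul _).add (hi1.const_mul _)
  have hc2 : Integrable (fun y : ℝ => (1/(2*s)) * (pker γ b x y t * y ^ (2:ℕ)))
      (volume.restrict (Ioi 0)) := hi2.const_mul _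
  have hc0 : Integrable (fun y : ℝ => (s/2 + x^2/(2*s)) * (pker γ b x y t * y ^ (0:ℕ)))
      (volume.restrict (Ioi 0)) := hi0.const_mul _
  have hc1 : Integrable (fun y : ℝ => (-(x/s)) * (pker γ b x y t * y ^ (1:ℕ)))
      (volume.restrict (Ioi 0)) := hi1.const_mul _
  rw [integral_add ha hc2, integral_add hc0 hc1,
    MeasureTheory.integral_const_mul, MeasureTheory.integral_const_mul,
    MeasureTheory.integral_const_mul, hv0, hv1, hv2]
  have hfin : (s/2 + x^2/(2*s)) * 1 + (-(x/s)) * (x + b*t)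
      + (1/(2*s)) * (x^2 + 2*(b+γ)*t*x + b*(b+γ)*t^2) = s := by
    field_simp
    linear_combination (-1) * hs2
  rw [hfin]
end

section
/- Let γ > 0 and b > 0. For every bounded continuous function f : [0,∞) → ℝ and every M > 0, one has lim_{t → 0⁺} sup_{x ∈ [0,M]} |P_t^{γ,b} f(x) − f(x)| = 0. -/
open MeasureTheory

/-- The semigroup `P_t^{γ,b}` (case `b > 0`):
`P_t^{γ,b} f(x) = e^{−x/(γt)} ∑_{m=0}^∞ (x/(γt))^m (1/(m! Γ(m + b/γ)))
  ∫_0^∞ e^{−z} z^{m + b/γ − 1} f(γzt) dz`. -/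
noncomputable def Psem (γ b t : ℝ) (f : ℝ → ℝ) (x : ℝ) : ℝ :=
  Real.exp (-x / (γ * t)) *
    ∑' m : ℕ, (x / (γ * t)) ^ m * (1 / ((m.factorial : ℝ) * Real.Gamma ((m : ℝ) + b / γ))) *
      ∫ z in Set.Ioi (0:ℝ), Real.exp (-z) * z ^ ((m : ℝ) + b / γ - 1) * f (γ * z * t)

/-- The supremum norm of `f` over `[0, ∞)`. -/
noncomputable def supIci (f : ℝ → ℝ) : ℝ := ⨆ y : Set.Ici (0:ℝ), |f (y : ℝ)|

lemma factSucc (m : ℕ) : ((m+1).factorial : ℝ) = ((m:ℝ)+1) * m.factorial := by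
  rw [Nat.factorial_succ]; push_cast; ring

lemma shift1 (s : ℝ) (m : ℕ) :
    ((m+1 : ℕ) : ℝ) * (s ^ (m+1) / ((m+1).factorial : ℝ)) = s * (s ^ m / m.factorial) := by
  have h2 : (m.factorial : ℝ) ≠ 0 := Nat.cast_ne_zero.mpr m.factorial_ne_zero
  have h3 : ((m:ℝ)+1) ≠ 0 := by positivity
  rw [factSucc]; push_cast; field_simp; ring

lemma shift2 (s : ℝ) (m : ℕ) :
    ((m+1 : ℕ) : ℝ) * (((m+1:ℕ):ℝ) - 1) * (s ^ (m+1) / ((m+1).factorial : ℝ))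
      = s * ((m:ℝ) * (s ^ m / m.factorial)) := by
  have h2 : (m.factorial : ℝ) ≠ 0 := Nat.cast_ne_zero.mpr m.factorial_ne_zero
  have h3 : ((m:ℝ)+1) ≠ 0 := by positivity
  rw [factSucc]; push_cast; field_simp; ring

lemma expSum0 (s : ℝ) : Summable (fun m : ℕ => s ^ m / m.factorial) ∧
    ∑' m : ℕ, s ^ m / (m.factorial : ℝ) = Real.exp s := by
  refine ⟨Real.summable_pow_div_factorial s, ?_⟩
  rw [Real.exp_eq_exp_ℝ, NormedSpace.exp_eq_tsum_div]

lemma expSum1 (s : ℝ) : Summable (fun m : ℕ => (m : ℝ) * (s ^ m / m.factorial)) ∧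
    ∑' m : ℕ, (m : ℝ) * (s ^ m / m.factorial) = s * Real.exp s := by
  have hsum : Summable (fun m : ℕ => (m : ℝ) * (s ^ m / m.factorial)) := by
    rw [← summable_nat_add_iff 1]
    exact ((Real.summable_pow_div_factorial s).mul_left s).congr
      (fun m => (shift1 s m).symm)
  refine ⟨hsum, ?_⟩
  rw [Summable.tsum_eq_zero_add hsum]
  rw [tsum_congr (fun m => shift1 s m), tsum_mul_left, (expSum0 s).2]
  simp

lemma expSum2 (s : ℝ) : Summable (fun m : ℕ => (m : ℝ) * ((m : ℝ) - 1) * (s ^ m / m.factorial)) ∧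
    ∑' m : ℕ, (m : ℝ) * ((m : ℝ) - 1) * (s ^ m / m.factorial) = s^2 * Real.exp s := by
  have hsum : Summable (fun m : ℕ => (m : ℝ) * ((m : ℝ) - 1) * (s ^ m / m.factorial)) := by
    rw [← summable_nat_add_iff 1]
    exact ((expSum1 s).1.mul_left s).congr (fun m => (shift2 s m).symm)
  refine ⟨hsum, ?_⟩
  rw [Summable.tsum_eq_zero_add hsum]
  rw [tsum_congr (fun m => shift2 s m), tsum_mul_left, (expSum1 s).2]
  simp; ring

/-- Integrability and value of `∫ e^{-z} z^{a-1} (C1 + C2 z + C3 z²) dz`. -/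
lemma quadGamma (a C1 C2 C3 : ℝ) (ha : 0 < a) :
    IntegrableOn (fun z : ℝ => Real.exp (-z) * z ^ (a-1) * (C1 + C2*z + C3*(z*z))) (Set.Ioi 0) ∧
    ∫ z in Set.Ioi (0:ℝ), Real.exp (-z) * z ^ (a-1) * (C1 + C2*z + C3*(z*z))
      = C1 * Real.Gamma a + C2 * Real.Gamma (a+1) + C3 * Real.Gamma (a+2) := by
  set g : ℝ → ℝ → ℝ := fun p z => Real.exp (-z) * z ^ (p-1) with hg
  have hgi : ∀ p : ℝ, 0 < p → IntegrableOn (g p) (Set.Ioi 0) := fun p hp =>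
    Real.GammaIntegral_convergent hp
  have hcomb : IntegrableOn
      (fun z => C1 * g a z + C2 * g (a+1) z + C3 * g (a+2) z) (Set.Ioi 0) :=
    (((hgi a ha).const_mul C1).add ((hgi (a+1) (by linarith)).const_mul C2)).add
      ((hgi (a+2) (by linarith)).const_mul C3)
  have heq : Set.EqOn (fun z : ℝ => Real.exp (-z) * z ^ (a-1) * (C1 + C2*z + C3*(z*z)))
      (fun z => C1 * g a z + C2 * g (a+1) z + C3 * g (a+2) z) (Set.Ioi 0) := by
    intro z hz
    have hz0 : (z:ℝ) ≠ 0 := (ne_of_gt hz)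
    have e1 : z ^ (a+1-1) = z ^ (a-1) * z := by
      rw [show a+1-1 = (a-1)+1 by ring, Real.rpow_add_one hz0]
    have e2 : z ^ (a+2-1) = z ^ (a-1) * (z*z) := by
      rw [show a+2-1 = ((a-1)+1)+1 by ring, Real.rpow_add_one hz0, Real.rpow_add_one hz0,
        mul_assoc]
    simp only [hg, e1, e2]
    ring
  have h1 : IntegrableOn (fun z => C1 * g a z + C2 * g (a+1) z) (Set.Ioi 0) :=
    ((hgi a ha).const_mul C1).add ((hgi (a+1) (by linarith)).const_mul C2)
  constructor
  · exact (hcomb.congr_fun heq.symm measurableSet_Ioi)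
  · rw [setIntegral_congr_fun measurableSet_Ioi heq]
    rw [integral_add h1 ((hgi (a+2) (by linarith)).const_mul C3),
      integral_add ((hgi a ha).const_mul C1) ((hgi (a+1) (by linarith)).const_mul C2),
      integral_const_mul, integral_const_mul, integral_const_mul,
      ← Real.Gamma_eq_integral ha, ← Real.Gamma_eq_integral (show (0:ℝ) < a+1 by linarith),
      ← Real.Gamma_eq_integral (show (0:ℝ) < a+2 by linarith)]

section aux
variable {γ b t x K C ε : ℝ} {f : ℝ → ℝ}

lemma fcomp_meas (hγ : 0 < γ) (ht : 0 < t) (hf : ContinuousOn f (Set.Ici 0)) :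
    AEStronglyMeasurable (fun z : ℝ => f (γ * z * t)) (volume.restrict (Set.Ioi 0)) := by
  apply ContinuousOn.aestronglyMeasurable _ measurableSet_Ioi
  apply hf.comp ((continuous_const.mul continuous_id).mul continuous_const).continuousOn
  intro z hz
  have hz' : (0:ℝ) < z := hz
  exact Set.mem_Ici.mpr (by show 0 ≤ γ * z * t; positivity)

lemma Iin_integrable (hγ : 0 < γ) (ht : 0 < t) (hf : ContinuousOn f (Set.Ici 0))
    (hK : ∀ y ≥ (0:ℝ), |f y| ≤ K) {p : ℝ} (hp : 0 < p) :
    IntegrableOn (fun z : ℝ => Real.exp (-z) * z ^ (p-1) * f (γ * z * t)) (Set.Ioi 0) := by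
  apply Integrable.mono' ((Real.GammaIntegral_convergent hp).const_mul K)
  · exact ((Real.GammaIntegral_convergent hp).aestronglyMeasurable).mul (fcomp_meas hγ ht hf)
  · filter_upwards [ae_restrict_mem measurableSet_Ioi] with z hz
    have hz' : (0:ℝ) < z := hz
    have hg : 0 ≤ Real.exp (-z) * z ^ (p-1) := by positivity
    rw [norm_mul, Real.norm_eq_abs, Real.norm_eq_abs, abs_of_nonneg hg, mul_comm K]
    exact mul_le_mul_of_nonneg_left (hK _ (by positivity)) hg

lemma Din_integrable (hγ : 0 < γ) (ht : 0 < t) (hf : ContinuousOn f (Set.Ici 0))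
    (hK : ∀ y ≥ (0:ℝ), |f y| ≤ K) {p : ℝ} (hp : 0 < p) :
    IntegrableOn (fun z : ℝ => Real.exp (-z) * z ^ (p-1) * (f (γ * z * t) - f x)) (Set.Ioi 0) := by
  have h := (Iin_integrable hγ ht hf hK hp).sub
    ((Real.GammaIntegral_convergent hp).mul_const (f x))
  simpa only [mul_sub, Pi.sub_def] using h

lemma Iin_bound (hγ : 0 < γ) (ht : 0 < t) (hf : ContinuousOn f (Set.Ici 0))
    (hK : ∀ y ≥ (0:ℝ), |f y| ≤ K) {p : ℝ} (hp : 0 < p) :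
    |∫ z in Set.Ioi (0:ℝ), Real.exp (-z) * z ^ (p-1) * f (γ * z * t)| ≤ K * Real.Gamma p := by
  rw [← Real.norm_eq_abs]
  calc ‖∫ z in Set.Ioi (0:ℝ), Real.exp (-z) * z ^ (p-1) * f (γ * z * t)‖
      ≤ ∫ z in Set.Ioi (0:ℝ), ‖Real.exp (-z) * z ^ (p-1) * f (γ * z * t)‖ :=
        norm_integral_le_integral_norm _
    _ ≤ ∫ z in Set.Ioi (0:ℝ), K * (Real.exp (-z) * z ^ (p-1)) := by
        apply integral_mono_ae (Iin_integrable hγ ht hf hK hp).norm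
          ((Real.GammaIntegral_convergent hp).const_mul K)
        filter_upwards [ae_restrict_mem measurableSet_Ioi] with z hz
        have hz' : (0:ℝ) < z := hz
        have hg : 0 ≤ Real.exp (-z) * z ^ (p-1) := by positivity
        rw [norm_mul, Real.norm_eq_abs, Real.norm_eq_abs, abs_of_nonneg hg, mul_comm K]
        exact mul_le_mul_of_nonneg_left (hK _ (by positivity)) hg
    _ = K * Real.Gamma p := by
        rw [integral_const_mul, ← Real.Gamma_eq_integral hp]
end aux
section aux2
variable {γ b t x K C ε : ℝ} {f : ℝ → ℝ}

lemma Din_bound (hγ : 0 < γ) (ht : 0 < t) (hx : 0 ≤ x) (hf : ContinuousOn f (Set.Ici 0))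
    (hK : ∀ y ≥ (0:ℝ), |f y| ≤ K) (hC : 0 ≤ C) (hε : 0 ≤ ε)
    (hfb : ∀ u, 0 ≤ u → |f u - f x| ≤ ε + C * (u - x)^2) {p : ℝ} (hp : 0 < p) :
    |∫ z in Set.Ioi (0:ℝ), Real.exp (-z) * z ^ (p-1) * (f (γ * z * t) - f x)|
      ≤ Real.Gamma p * (ε + C * (γ^2*t^2*(p*(p+1)) - 2*γ*t*x*p + x^2)) := by
  obtain ⟨hqi, hqv⟩ := quadGamma p (ε + C*x^2) (-(2*C*γ*t*x)) (C*γ^2*t^2) hp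
  have h2 : (fun z : ℝ => Real.exp (-z) * z ^ (p-1) * (ε + C*(γ*z*t - x)^2))
      = fun z : ℝ => Real.exp (-z) * z ^ (p-1) *
        ((ε + C*x^2) + (-(2*C*γ*t*x))*z + (C*γ^2*t^2)*(z*z)) := funext fun z => by ring
  have hQint : IntegrableOn (fun z : ℝ => Real.exp (-z) * z ^ (p-1) * (ε + C*(γ*z*t - x)^2))
      (Set.Ioi 0) := by rw [h2]; exact hqi
  rw [← Real.norm_eq_abs]
  calc ‖∫ z in Set.Ioi (0:ℝ), Real.exp (-z) * z ^ (p-1) * (f (γ * z * t) - f x)‖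
      ≤ ∫ z in Set.Ioi (0:ℝ), ‖Real.exp (-z) * z ^ (p-1) * (f (γ * z * t) - f x)‖ :=
        norm_integral_le_integral_norm _
    _ ≤ ∫ z in Set.Ioi (0:ℝ), Real.exp (-z) * z ^ (p-1) * (ε + C*(γ*z*t - x)^2) := by
        apply integral_mono_ae (Din_integrable hγ ht hf hK hp).norm hQint
        filter_upwards [ae_restrict_mem measurableSet_Ioi] with z hz
        have hz' : (0:ℝ) < z := hz
        have hg : 0 ≤ Real.exp (-z) * z ^ (p-1) := by positivity
        rw [norm_mul, Real.norm_eq_abs, Real.norm_eq_abs, abs_of_nonneg hg]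
        exact mul_le_mul_of_nonneg_left (hfb _ (by positivity)) hg
    _ = (ε + C*x^2) * Real.Gamma p + (-(2*C*γ*t*x)) * Real.Gamma (p+1)
        + (C*γ^2*t^2) * Real.Gamma (p+2) := by rw [h2]; exact hqv
    _ = Real.Gamma p * (ε + C * (γ^2*t^2*(p*(p+1)) - 2*γ*t*x*p + x^2)) := by
        rw [show p+2 = (p+1)+1 by ring, Real.Gamma_add_one (s := p+1) (by positivity),
          Real.Gamma_add_one hp.ne']
        ring
end aux2
lemma Psem_sub_bound (γ b t x K C ε : ℝ) (f : ℝ → ℝ) (hγ : 0 < γ) (hb : 0 < b) (ht : 0 < t)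
    (hx : 0 ≤ x) (hf : ContinuousOn f (Set.Ici 0))
    (hK : ∀ y ≥ (0:ℝ), |f y| ≤ K) (hC : 0 ≤ C) (hε : 0 ≤ ε)
    (hfb : ∀ u, 0 ≤ u → |f u - f x| ≤ ε + C * (u - x)^2) :
    |Psem γ b t f x - f x| ≤ ε + C * (2*γ*t*x + γ*b*t^2 + b^2*t^2) := by
  have hγt : (0:ℝ) < γ * t := mul_pos hγ ht
  set c : ℝ := b / γ with hcdef
  set s : ℝ := x / (γ * t) with hsdef
  have hc : 0 < c := div_pos hb hγ
  have hs : 0 ≤ s := div_nonneg hx hγt.le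
  have hK0 : 0 ≤ K := le_trans (abs_nonneg _) (hK 0 le_rfl)
  have hpc : ∀ m : ℕ, (0:ℝ) < (m:ℝ) + c := fun m => by positivity
  have hΓpos : ∀ m : ℕ, 0 < Real.Gamma ((m:ℝ)+c) := fun m => Real.Gamma_pos_of_pos (hpc m)
  have hfact : ∀ m : ℕ, ((m.factorial : ℝ)) ≠ 0 := fun m => Nat.cast_ne_zero.mpr m.factorial_ne_zero
  set u : ℕ → ℝ := fun m => s ^ m / m.factorial with hudef
  set cf : ℕ → ℝ := fun m => s ^ m * (1 / (m.factorial * Real.Gamma ((m:ℝ) + c))) with hcfdef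
  set II : ℕ → ℝ :=
    fun m => ∫ z in Set.Ioi (0:ℝ), Real.exp (-z) * z ^ ((m:ℝ) + c - 1) * f (γ * z * t) with hIdef
  set DD : ℕ → ℝ :=
    fun m => ∫ z in Set.Ioi (0:ℝ), Real.exp (-z) * z ^ ((m:ℝ) + c - 1) * (f (γ * z * t) - f x)
    with hDdef
  set R : ℝ → ℝ := fun p => ε + C * (γ^2*t^2*(p*(p+1)) - 2*γ*t*x*p + x^2) with hRdef
  set W : ℕ → ℝ := fun m => u m * R ((m:ℝ) + c) with hWdef
  set A : ℝ := ε + C*(γ^2*t^2*(c*(c+1)) - 2*γ*t*x*c + x^2) with hAdef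
  set B : ℝ := C*(γ^2*t^2*(2*c+2) - 2*γ*t*x) with hBdef
  set E : ℝ := C*(γ^2*t^2) with hEdef
  have hPsem : Psem γ b t f x = Real.exp (-s) * ∑' m : ℕ, cf m * II m := by
    simp only [Psem, hcfdef, hIdef, hsdef, hcdef, neg_div]
  have hcfpos : ∀ m, 0 ≤ cf m := fun m => by
    simp only [hcfdef]
    have := (hΓpos m); have := hfact m; positivity
  have hDD : ∀ m : ℕ, cf m * II m = cf m * DD m + u m * f x := by
    intro m
    have hA : DD m = II m - Real.Gamma ((m:ℝ)+c) * f x := by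
      simp only [hDdef, hIdef]
      simp_rw [mul_sub]
      rw [integral_sub (Iin_integrable hγ ht hf hK (hpc m))
        ((Real.GammaIntegral_convergent (hpc m)).mul_const (f x)),
        integral_mul_const, ← Real.Gamma_eq_integral (hpc m)]
    rw [hA]
    simp only [hcfdef, hudef]
    field_simp [(hΓpos m).ne']
    ring
  have hDb : ∀ m : ℕ, |DD m| ≤ Real.Gamma ((m:ℝ)+c) * R ((m:ℝ)+c) := by
    intro m
    simp only [hDdef, hRdef]
    exact Din_bound hγ ht hx hf hK hC hε hfb (hpc m)
  have hRnn : ∀ m : ℕ, 0 ≤ R ((m:ℝ)+c) := by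
    intro m
    have h := (abs_nonneg (DD m)).trans (hDb m)
    nlinarith [hΓpos m]
  have hnormW : ∀ m : ℕ, ‖cf m * DD m‖ ≤ W m := by
    intro m
    rw [norm_mul, Real.norm_eq_abs, Real.norm_eq_abs, abs_of_nonneg (hcfpos m)]
    calc cf m * |DD m| ≤ cf m * (Real.Gamma ((m:ℝ)+c) * R ((m:ℝ)+c)) :=
          mul_le_mul_of_nonneg_left (hDb m) (hcfpos m)
      _ = W m := by
          simp only [hcfdef, hWdef, hudef]
          field_simp [(hΓpos m).ne']
  have hWeq : ∀ m : ℕ, A * (s^m / m.factorial) + (B * ((m:ℝ) * (s^m / m.factorial))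
      + E * ((m:ℝ)*((m:ℝ)-1) * (s^m / m.factorial))) = W m := by
    intro m
    simp only [hWdef, hRdef, hudef, hAdef, hBdef, hEdef]
    ring
  have hWsum : Summable W :=
    (((expSum0 s).1.mul_left A).add (((expSum1 s).1.mul_left B).add
      ((expSum2 s).1.mul_left E))).congr hWeq
  have hWt : ∑' m, W m = Real.exp s * (A + B*s + E*s^2) := by
    rw [← tsum_congr hWeq,
      Summable.tsum_add ((expSum0 s).1.mul_left A) (((expSum1 s).1.mul_left B).add
        ((expSum2 s).1.mul_left E)),
      Summable.tsum_add ((expSum1 s).1.mul_left B) ((expSum2 s).1.mul_left E),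
      tsum_mul_left, tsum_mul_left, tsum_mul_left, (expSum0 s).2, (expSum1 s).2, (expSum2 s).2]
    ring
  have hnormsum : Summable (fun m => ‖cf m * DD m‖) :=
    Summable.of_nonneg_of_le (fun m => norm_nonneg _) hnormW hWsum
  have hsumDD : Summable (fun m => cf m * DD m) := hnormsum.of_norm
  have hsumuf : Summable (fun m => u m * f x) := (expSum0 s).1.mul_right (f x)
  have htsum : ∑' m, cf m * II m = (∑' m, cf m * DD m) + Real.exp s * f x := by
    rw [tsum_congr hDD, Summable.tsum_add hsumDD hsumuf, tsum_mul_right]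
    simp only [hudef]
    rw [(expSum0 s).2]
  have hexp : Real.exp (-s) * Real.exp s = 1 := by rw [← Real.exp_add]; simp
  rw [hPsem, htsum]
  have hre : Real.exp (-s) * ((∑' m, cf m * DD m) + Real.exp s * f x) - f x
      = Real.exp (-s) * ∑' m, cf m * DD m := by
    rw [mul_add, ← mul_assoc, hexp]; ring
  rw [hre, abs_mul, abs_of_pos (Real.exp_pos _)]
  calc Real.exp (-s) * |∑' m, cf m * DD m| ≤ Real.exp (-s) * ∑' m, W m := by
        apply mul_le_mul_of_nonneg_left _ (Real.exp_pos _).le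
        calc |∑' m, cf m * DD m| ≤ ∑' m, ‖cf m * DD m‖ := by
              rw [← Real.norm_eq_abs]; exact norm_tsum_le_tsum_norm hnormsum
          _ ≤ ∑' m, W m := Summable.tsum_le_tsum hnormW hnormsum hWsum
    _ = Real.exp (-s) * (Real.exp s * (A + B*s + E*s^2)) := by rw [hWt]
    _ = A + B*s + E*s^2 := by rw [← mul_assoc, hexp, one_mul]
    _ = ε + C * (2*γ*t*x + γ*b*t^2 + b^2*t^2) := by
        rw [hAdef, hBdef, hEdef, hsdef, hcdef]
        field_simp
        ring

/-- Let `γ > 0`, `b > 0`. For every bounded continuous `f : [0,∞) → ℝ` and every `M > 0`,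
`lim_{t → 0⁺} sup_{x ∈ [0,M]} |P_t^{γ,b} f(x) − f(x)| = 0`. -/
theorem stmt11 (γ b : ℝ) (hγ : 0 < γ) (hb : 0 < b) (f : ℝ → ℝ)
    (hf : ContinuousOn f (Set.Ici 0)) (hbd : ∃ K, ∀ y ≥ (0:ℝ), |f y| ≤ K)
    (M : ℝ) (hM : 0 < M) :
    Filter.Tendsto (fun t => ⨆ x : Set.Icc (0:ℝ) M, |Psem γ b t f (x : ℝ) - f (x : ℝ)|)
      (nhdsWithin 0 (Set.Ioi 0)) (nhds 0) := by
  obtain ⟨K, hK⟩ := hbd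
  have hK0 : 0 ≤ K := le_trans (abs_nonneg _) (hK 0 le_rfl)
  rw [Metric.tendsto_nhdsWithin_nhds]
  intro ε hε
  have huc : UniformContinuousOn f (Set.Icc 0 (M+1)) :=
    isCompact_Icc.uniformContinuousOn_of_continuous
      (hf.mono (fun y hy => hy.1))
  obtain ⟨δ, hδ, hδf⟩ := Metric.uniformContinuousOn_iff.mp huc (ε/2) (by linarith)
  set δ' : ℝ := min δ 1 with hδ'def
  have hδ'0 : 0 < δ' := lt_min hδ one_pos
  have hδ'1 : δ' ≤ 1 := min_le_right _ _
  have hδ'δ : δ' ≤ δ := min_le_left _ _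
  set C : ℝ := 2*K/δ'^2 with hCdef
  have hC : 0 ≤ C := by positivity
  have hfb : ∀ x ∈ Set.Icc (0:ℝ) M, ∀ u, 0 ≤ u → |f u - f x| ≤ ε/2 + C*(u-x)^2 := by
    intro x hx u hu
    by_cases h : |u - x| < δ'
    · have hux : u ≤ x + δ' := by
        have := abs_lt.mp h
        linarith [this.1, this.2]
      have hxmem : x ∈ Set.Icc (0:ℝ) (M+1) := ⟨hx.1, by linarith [hx.2]⟩
      have humem : u ∈ Set.Icc (0:ℝ) (M+1) := ⟨hu, by linarith [hx.2]⟩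
      have hd := hδf u humem x hxmem (by rw [Real.dist_eq]; exact lt_of_lt_of_le h hδ'δ)
      rw [Real.dist_eq] at hd
      nlinarith [sq_nonneg (u - x)]
    · push_neg at h
      have h1 : |f u - f x| ≤ 2*K := by
        calc |f u - f x| ≤ |f u| + |f x| := abs_sub _ _
          _ ≤ 2*K := by linarith [hK u hu, hK x hx.1]
      have hd2 : δ'^2 ≤ (u-x)^2 := by
        calc δ'^2 = δ'*δ' := sq δ'
          _ ≤ |u - x| * |u - x| := mul_self_le_mul_self hδ'0.le h
          _ = (u-x)^2 := by rw [abs_mul_abs_self, sq]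
      have hCδ : C*δ'^2 = 2*K := by
        rw [hCdef]; field_simp
      have : 2*K ≤ C*(u-x)^2 := by
        calc 2*K = C*δ'^2 := hCδ.symm
          _ ≤ C*(u-x)^2 := mul_le_mul_of_nonneg_left hd2 hC
      linarith
  set C' : ℝ := C*(2*γ*M + γ*b + b^2) + 1 with hC'def
  have hC'0 : 0 < C' := by positivity
  refine ⟨min 1 (ε/(2*C')), lt_min one_pos (by positivity), ?_⟩
  intro t ht hdist
  have ht0 : 0 < t := ht
  have htη : t < min 1 (ε/(2*C')) := by
    rwa [Real.dist_eq, sub_zero, abs_of_pos ht0] at hdist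
  have ht1 : t ≤ 1 := le_trans htη.le (min_le_left _ _)
  have hbound : ∀ x : Set.Icc (0:ℝ) M, |Psem γ b t f (x:ℝ) - f (x:ℝ)| ≤ ε/2 + C'*t := by
    intro x
    obtain ⟨hx0, hxM⟩ := x.2
    have h1 := Psem_sub_bound γ b t x K C (ε/2) f hγ hb ht0 hx0 hf hK hC (by linarith)
      (hfb x x.2)
    have h2 : C*(2*γ*t*(x:ℝ) + γ*b*t^2 + b^2*t^2) ≤ C'*t := by
      have e2 : t^2 ≤ t := by nlinarith
      have e1 : 2*γ*t*(x:ℝ) ≤ 2*γ*t*M :=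
        mul_le_mul_of_nonneg_left hxM (by positivity)
      have e3 : γ*b*t^2 ≤ γ*b*t := mul_le_mul_of_nonneg_left e2 (by positivity)
      have e4 : b^2*t^2 ≤ b^2*t := mul_le_mul_of_nonneg_left e2 (by positivity)
      have e5 : 2*γ*t*(x:ℝ) + γ*b*t^2 + b^2*t^2 ≤ (2*γ*M + γ*b + b^2)*t := by linarith
      calc C*(2*γ*t*(x:ℝ) + γ*b*t^2 + b^2*t^2) ≤ C*((2*γ*M + γ*b + b^2)*t) :=
            mul_le_mul_of_nonneg_left e5 hC
        _ ≤ C'*t := by rw [hC'def]; nlinarith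
    calc |Psem γ b t f (x:ℝ) - f (x:ℝ)|
        ≤ ε/2 + C*(2*γ*t*(x:ℝ) + γ*b*t^2 + b^2*t^2) := h1
      _ ≤ ε/2 + C'*t := add_le_add_right h2 (ε/2)
  have hsup_nonneg : 0 ≤ ⨆ x : Set.Icc (0:ℝ) M, |Psem γ b t f (x:ℝ) - f (x:ℝ)| :=
    Real.iSup_nonneg (fun x => abs_nonneg _)
  have hsup_le : (⨆ x : Set.Icc (0:ℝ) M, |Psem γ b t f (x:ℝ) - f (x:ℝ)|) ≤ ε/2 + C'*t :=
    Real.iSup_le hbound (by positivity)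
  rw [Real.dist_eq, sub_zero, abs_of_nonneg hsup_nonneg]
  have hlast : C'*t < ε/2 := by
    have h6 : t < ε/(2*C') := lt_of_lt_of_le htη (min_le_right _ _)
    rw [lt_div_iff₀ (by positivity)] at h6
    nlinarith
  linarith
end
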